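/- arXiv:2303.11768 — 3 statements merged into one kernel-verified Lean document; each statement's English description precedes it below -/
import Mathlib

section
/- Let X be a non-compact Hausdorff space. The following are equivalent: (i) 𝕂(X) has the Hurewicz property; (ii) 𝕂(X) satisfies S_fin(𝒦_{𝕂(X)}, 𝒦_{𝕂(X)}^gp); (iii) X satisfies S_fin(𝒦_X, 𝒦_X) and the groupable k-covers of X are exactly the countable k-covers of X; (iv) X satisfies S_fin(𝒦_X, 𝒦_X^gp); (v) One does not have a winning strategy in the game G_fin(𝒦_X, 𝒦_X^gp). -/
open Set TopologicalSpace

universe u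

/-- A non-trivial open cover: a family of nonempty proper open sets covering `X`. -/
def NTOpenCover (X : Type u) [TopologicalSpace X] (𝒰 : Set (Set X)) : Prop :=
  (∀ U ∈ 𝒰, IsOpen U ∧ U.Nonempty ∧ U ≠ Set.univ) ∧ ⋃₀ 𝒰 = Set.univ

/-- `𝒪_X`, the collection of non-trivial open covers of `X`. -/
def OX (X : Type u) [TopologicalSpace X] : Set (Set (Set X)) := {𝒰 | NTOpenCover X 𝒰}

/-- The Hurewicz property. -/
def HurewiczProp (X : Type u) [TopologicalSpace X] : Prop :=
  ∀ 𝒰 : ℕ → Set (Set X), (∀ n, 𝒰 n ∈ OX X) →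
    ∃ ℱ : ℕ → Set (Set X), (∀ n, ℱ n ⊆ 𝒰 n ∧ (ℱ n).Finite) ∧
      ∀ x : X, ∃ m : ℕ, ∀ n ≥ m, x ∈ ⋃₀ ℱ n

/-- The selection principle `S_fin(𝒜, ℬ)`. -/
def Sfin {α : Type u} (𝒜 ℬ : Set (Set α)) : Prop :=
  ∀ 𝒰 : ℕ → Set α, (∀ n, 𝒰 n ∈ 𝒜) →
    ∃ ℱ : ℕ → Set α, (∀ n, ℱ n ⊆ 𝒰 n ∧ (ℱ n).Finite) ∧ (⋃ n, ℱ n) ∈ ℬ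

/-- The selection principle `S_1(𝒜, ℬ)`. -/
def Sone {α : Type u} (𝒜 ℬ : Set (Set α)) : Prop :=
  ∀ 𝒰 : ℕ → Set α, (∀ n, 𝒰 n ∈ 𝒜) →
    ∃ f : ℕ → α, (∀ n, f n ∈ 𝒰 n) ∧ Set.range f ∈ ℬ

/-- A member `C` of a collection `ℭ` is groupable if there is a finite-to-one map
`φ : C → ℕ` such that for every infinite `J ⊆ ℕ`, `⋃ {φ⁻¹(n) : n ∈ J} ∈ ℭ`. -/
def Groupable {α : Type u} (ℭ : Set (Set α)) (C : Set α) : Prop :=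
  ∃ φ : α → ℕ, (∀ n : ℕ, {x ∈ C | φ x = n}.Finite) ∧
    ∀ J : Set ℕ, J.Infinite → {x ∈ C | φ x ∈ J} ∈ ℭ

/-- `ℭ^gp`, the collection of groupable members of `ℭ`. -/
def groupables {α : Type u} (ℭ : Set (Set α)) : Set (Set α) :=
  {C | C ∈ ℭ ∧ Groupable ℭ C}

/-- The Menger property. -/
def MengerProp (X : Type u) [TopologicalSpace X] : Prop := Sfin (OX X) (OX X)

/-- The Rothberger property. -/
def RothbergerProp (X : Type u) [TopologicalSpace X] : Prop := Sone (OX X) (OX X)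

/-- The Gerlits-Nagy property: Hurewicz and Rothberger. -/
def GerlitsNagyProp (X : Type u) [TopologicalSpace X] : Prop :=
  HurewiczProp X ∧ RothbergerProp X

/-- `𝒪_X(𝒜)`, the collection of `𝒜`-covers of `X`. -/
def ACovers (X : Type u) [TopologicalSpace X] (𝒜 : Set (Set X)) : Set (Set (Set X)) :=
  {𝒰 | 𝒰 ∈ OX X ∧ ∀ A ∈ 𝒜, ∃ U ∈ 𝒰, A ⊆ U}

/-- `𝒦_X`, the collection of `k`-covers of `X`. -/
def KCovers (X : Type u) [TopologicalSpace X] : Set (Set (Set X)) :=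
  {𝒰 | 𝒰 ∈ OX X ∧ ∀ K : Set X, IsCompact K → K.Nonempty → ∃ U ∈ 𝒰, K ⊆ U}

/-- `Ω_X`, the collection of `ω`-covers of `X`. -/
def OmegaCovers (X : Type u) [TopologicalSpace X] : Set (Set (Set X)) :=
  {𝒰 | 𝒰 ∈ OX X ∧ ∀ F : Set X, F.Finite → F.Nonempty → ∃ U ∈ 𝒰, F ⊆ U}

/-- An ideal of closed sets of `X`. -/
def IdealOfClosedSets (X : Type u) [TopologicalSpace X] (𝒜 : Set (Set X)) : Prop :=
  (∀ A ∈ 𝒜, IsClosed A ∧ A.Nonempty ∧ A ≠ Set.univ) ∧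
  (∀ F : Set X, F.Finite → F.Nonempty → F ∈ 𝒜) ∧
  (∀ A B : Set X, A ∈ 𝒜 → B ∈ 𝒜 → A ∪ B ≠ Set.univ → A ∪ B ∈ 𝒜) ∧
  (∀ A ∈ 𝒜, ∀ B : Set X, B ⊆ A → IsClosed B → B.Nonempty → B ∈ 𝒜)

/-- One has a winning strategy in the Hurewicz game on `X`. -/
def OneWinsHurewicz (X : Type u) [TopologicalSpace X] : Prop :=
  ∃ σ : List (Set (Set X)) → Set (Set X), (∀ s, σ s ∈ OX X) ∧
    ∀ F : ℕ → Set (Set X),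
      (∀ n, (F n).Finite ∧ F n ⊆ σ (List.ofFn fun i : Fin n => F i)) →
        ∃ x : X, ∀ m : ℕ, ∃ n ≥ m, x ∉ ⋃₀ F n

/-- One has a winning strategy in `G_fin(𝒜, ℬ)`. -/
def OneWinsGfin {α : Type u} (𝒜 ℬ : Set (Set α)) : Prop :=
  ∃ σ : List (Set α) → Set α, (∀ s, σ s ∈ 𝒜) ∧
    ∀ F : ℕ → Set α,
      (∀ n, (F n).Finite ∧ F n ⊆ σ (List.ofFn fun i : Fin n => F i)) →
        (⋃ n, F n) ∉ ℬ

/-- One has a winning predetermined strategy in `G_fin(𝒜, ℬ)`. -/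
def OneWinsPreGfin {α : Type u} (𝒜 ℬ : Set (Set α)) : Prop :=
  ∃ σ : ℕ → Set α, (∀ n, σ n ∈ 𝒜) ∧
    ∀ F : ℕ → Set α, (∀ n, (F n).Finite ∧ F n ⊆ σ n) → (⋃ n, F n) ∉ ℬ

/-- One has a winning strategy in `G_1(𝒜, ℬ)`. -/
def OneWinsGone {α : Type u} (𝒜 ℬ : Set (Set α)) : Prop :=
  ∃ σ : List α → Set α, (∀ s, σ s ∈ 𝒜) ∧
    ∀ f : ℕ → α, (∀ n, f n ∈ σ (List.ofFn fun i : Fin n => f i)) → Set.range f ∉ ℬ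

/-- One has a winning predetermined strategy in `G_1(𝒜, ℬ)`. -/
def OneWinsPreGone {α : Type u} (𝒜 ℬ : Set (Set α)) : Prop :=
  ∃ σ : ℕ → Set α, (∀ n, σ n ∈ 𝒜) ∧
    ∀ f : ℕ → α, (∀ n, f n ∈ σ n) → Set.range f ∉ ℬ

/-- The collection `𝒜` of subsets of `X`, viewed as a hyperspace with the Vietoris topology. -/
def Hyper (X : Type u) (𝒜 : Set (Set X)) : Type u := {K : Set X // K ∈ 𝒜}

/-- The Vietoris topology on `Hyper X 𝒜`. -/
instance Hyper.topologicalSpace (X : Type u) [TopologicalSpace X] (𝒜 : Set (Set X)) :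
    TopologicalSpace (Hyper X 𝒜) :=
  TopologicalSpace.generateFrom
    {S | ∃ U : Set X, IsOpen U ∧
      (S = {K : Hyper X 𝒜 | K.1 ⊆ U} ∨ S = {K : Hyper X 𝒜 | (K.1 ∩ U).Nonempty})}

/-- `𝕂(X)`: the nonempty compact subsets of `X` with the Vietoris topology. -/
abbrev HyperK (X : Type u) [TopologicalSpace X] : Type u :=
  Hyper X {K : Set X | IsCompact K ∧ K.Nonempty}

/-- `𝒫_fin(X)`: the nonempty finite subsets of `X` with the Vietoris topology. -/
abbrev PFin (X : Type u) : Type u :=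
  Hyper X {F : Set X | F.Finite ∧ F.Nonempty}

/-- `C_p(X)`: continuous real-valued functions with the topology of pointwise convergence
(the subspace topology from the product topology on `X → ℝ`). -/
abbrev Cp (X : Type u) [TopologicalSpace X] : Type u := {f : X → ℝ // Continuous f}

/-- `C_k(X)`: continuous real-valued functions with the compact-open topology. -/
def Ck (X : Type u) [TopologicalSpace X] : Type u := {f : X → ℝ // Continuous f}

instance Ck.topologicalSpace (X : Type u) [TopologicalSpace X] : TopologicalSpace (Ck X) :=
  TopologicalSpace.generateFrom
    {S | ∃ (K : Set X) (U : Set ℝ), IsCompact K ∧ IsOpen U ∧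
      S = {f : Ck X | ∀ x ∈ K, f.1 x ∈ U}}

/-- The constantly zero function in `C_p(X)`. -/
def zeroCp (X : Type u) [TopologicalSpace X] : Cp X := ⟨fun _ => (0 : ℝ), continuous_const⟩

/-- The constantly zero function in `C_k(X)`. -/
def zeroCk (X : Type u) [TopologicalSpace X] : Ck X := ⟨fun _ => (0 : ℝ), continuous_const⟩

/-- `Ω_{Y,y}`: the sets having `y` in their closure but not containing `y`. -/
def OmegaPt (Y : Type u) [TopologicalSpace Y] (y : Y) : Set (Set Y) :=
  {A | y ∈ closure A ∧ y ∉ A}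

/-- Countable fan-tightness. -/
def CountableFanTightness (Y : Type u) [TopologicalSpace Y] : Prop :=
  ∀ y : Y, Sfin (OmegaPt Y y) (OmegaPt Y y)

/-- Countable strong fan-tightness. -/
def CountableStrongFanTightness (Y : Type u) [TopologicalSpace Y] : Prop :=
  ∀ y : Y, Sone (OmegaPt Y y) (OmegaPt Y y)

/-- The Reznichenko property: every countable member of `Ω_{Y,y}` is groupable. -/
def Reznichenko (Y : Type u) [TopologicalSpace Y] : Prop :=
  ∀ y : Y, ∀ A ∈ OmegaPt Y y, A.Countable → Groupable (OmegaPt Y y) A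


namespace S7
open Classical

section Generic
variable {Z : Type u} [TopologicalSpace Z]

/-- Membership criterion for `KCovers` from the two essential conditions. -/
lemma mem_kcovers {E : Set (Set Z)}
    (hmem : ∀ U ∈ E, IsOpen U ∧ U.Nonempty ∧ U ≠ Set.univ)
    (hk : ∀ K : Set Z, IsCompact K → K.Nonempty → ∃ U ∈ E, K ⊆ U) :
    E ∈ KCovers Z := by
  refine ⟨⟨hmem, ?_⟩, hk⟩
  ext z
  simp only [Set.mem_univ, iff_true, Set.mem_sUnion]
  obtain ⟨U, hU, hz⟩ := hk {z} isCompact_singleton (Set.singleton_nonempty z)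
  exact ⟨U, hU, hz rfl⟩

lemma kcovers_mono {D E 𝒰 : Set (Set Z)} (h𝒰 : ∀ U ∈ 𝒰, IsOpen U ∧ U.Nonempty ∧ U ≠ Set.univ)
    (hD : D ∈ KCovers Z) (hDE : D ⊆ E) (hE : E ⊆ 𝒰) : E ∈ KCovers Z := by
  refine mem_kcovers (fun U hU => h𝒰 U (hE hU)) (fun K hK hKne => ?_)
  obtain ⟨U, hU, hKU⟩ := hD.2 K hK hKne
  exact ⟨U, hDE hU, hKU⟩

/-- Removing finitely many members of a k-cover leaves a k-cover. -/
lemma kcovers_diff_finite {𝒰 G : Set (Set Z)} (h : 𝒰 ∈ KCovers Z) (hG : G.Finite) :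
    𝒰 \ G ∈ KCovers Z := by
  refine mem_kcovers (fun U hU => h.1.1 U hU.1) (fun K hK hKne => ?_)
  obtain ⟨x0, hx0⟩ := hKne
  set g : Set Z → Z := fun V => if hv : ∃ x, x ∉ V then hv.choose else x0 with hg
  have hT : (g '' (G ∩ 𝒰)).Finite := ((hG.inter_of_left 𝒰).image g)
  obtain ⟨U, hU, hKU⟩ := h.2 (K ∪ g '' (G ∩ 𝒰)) (hK.union hT.isCompact)
    ⟨x0, Or.inl hx0⟩
  refine ⟨U, ⟨hU, fun hUG => ?_⟩, fun x hx => hKU (Or.inl hx)⟩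
  have hUP : ∃ x, x ∉ U := by
    have := (h.1.1 U hU).2.2
    rcases Set.ne_univ_iff_exists_notMem U |>.mp this with ⟨x, hx⟩
    exact ⟨x, hx⟩
  have : g U ∈ U := hKU (Or.inr ⟨U, ⟨hUG, hU⟩, rfl⟩)
  rw [hg] at this
  simp only [dif_pos hUP] at this
  exact hUP.choose_spec this

/-- k-covers are infinite. -/
lemma kcovers_infinite [Nonempty Z] {𝒰 : Set (Set Z)} (h : 𝒰 ∈ KCovers Z) : 𝒰.Infinite := by
  intro hfin
  have h2 := kcovers_diff_finite h hfin
  obtain ⟨z⟩ := ‹Nonempty Z›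
  obtain ⟨U, hU, -⟩ := h2.2 {z} isCompact_singleton (Set.singleton_nonempty z)
  exact hU.2 hU.1

lemma groupable_countable {C : Set (Set Z)} (h : Groupable (KCovers Z) C) : C.Countable := by
  obtain ⟨φ, hfin, -⟩ := h
  have : C ⊆ ⋃ n : ℕ, {x ∈ C | φ x = n} := fun x hx => Set.mem_iUnion.2 ⟨φ x, hx, rfl⟩
  exact (Set.countable_iUnion (fun n => (hfin n).countable)).mono this

/-- The values at which a compact set is "captured" by a group form a cofinite set. -/
lemma groupable_cofinite {C : Set (Set Z)} {φ : Set Z → ℕ}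
    (hJ : ∀ J : Set ℕ, J.Infinite → {x ∈ C | φ x ∈ J} ∈ KCovers Z)
    {K : Set Z} (hK : IsCompact K) (hKne : K.Nonempty) :
    {n : ℕ | ∃ U ∈ C, φ U = n ∧ K ⊆ U}ᶜ.Finite := by
  by_contra hinf
  have hinf2 : {n : ℕ | ∃ U ∈ C, φ U = n ∧ K ⊆ U}ᶜ.Infinite := hinf
  obtain ⟨U, hU, hKU⟩ := (hJ _ hinf2).2 K hK hKne
  exact hU.2 ⟨U, hU.1, rfl, hKU⟩

/-- From a finite-to-one map with the cofinite capture property, conclude groupability. -/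
lemma groupable_of_cofinite {C : Set (Set Z)}
    (hmem : ∀ U ∈ C, IsOpen U ∧ U.Nonempty ∧ U ≠ Set.univ) (φ : Set Z → ℕ)
    (hfin : ∀ n : ℕ, {x ∈ C | φ x = n}.Finite)
    (hcof : ∀ K : Set Z, IsCompact K → K.Nonempty →
      {n : ℕ | ∃ U ∈ C, φ U = n ∧ K ⊆ U}ᶜ.Finite) :
    Groupable (KCovers Z) C := by
  refine ⟨φ, hfin, fun J hJ => ?_⟩
  refine mem_kcovers (fun U hU => hmem U hU.1) (fun K hK hKne => ?_)
  have := hcof K hK hKne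
  obtain ⟨n, hnJ, hn⟩ := (hJ.diff this).nonempty
  simp only [Set.mem_compl_iff, Set.not_notMem] at hn
  obtain ⟨U, hUC, hφ, hKU⟩ := hn
  exact ⟨U, ⟨hUC, hφ ▸ hnJ⟩, hKU⟩

/-- A countable k-cover containing a groupable k-cover is groupable. -/
lemma groupable_extend {C 𝒰 : Set (Set Z)} (h𝒰 : 𝒰 ∈ KCovers Z) (h𝒰c : 𝒰.Countable)
    (hC : C ⊆ 𝒰) (hgp : Groupable (KCovers Z) C) : Groupable (KCovers Z) 𝒰 := by
  obtain ⟨φ, hfin, hJ⟩ := hgp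
  have hcnt : (𝒰 \ C).Countable := h𝒰c.mono Set.diff_subset
  have := hcnt.to_subtype
  obtain ⟨f, hf⟩ := Countable.exists_injective_nat (↥(𝒰 \ C))
  classical
  set e : Set Z → ℕ := fun U => if hU : U ∈ 𝒰 \ C then f ⟨U, hU⟩ else 0 with he
  have heInj : Set.InjOn e (𝒰 \ C) := by
    intro a ha b hb hab
    rw [he] at hab
    simp only [dif_pos ha, dif_pos hb] at hab
    exact congrArg Subtype.val (hf hab)
  set ψ : Set Z → ℕ := fun U => if U ∈ C then φ U else e U with hψ
  have hψC : ∀ x ∈ C, ψ x = φ x := fun x hx => by simp [hψ, hx]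
  refine ⟨ψ, fun n => ?_, fun J hJ' => ?_⟩
  · have hsub : {x ∈ 𝒰 | ψ x = n} ⊆ {x ∈ C | φ x = n} ∪ {x ∈ 𝒰 \ C | e x = n} := by
      intro x hx
      by_cases hxC : x ∈ C
      · exact Or.inl ⟨hxC, by rw [← hψC x hxC]; exact hx.2⟩
      · refine Or.inr ⟨⟨hx.1, hxC⟩, ?_⟩
        have : ψ x = e x := by simp [hψ, hxC]
        rw [← this]; exact hx.2
    refine Set.Finite.subset (Set.Finite.union (hfin n) ?_) hsub
    have : {x ∈ 𝒰 \ C | e x = n}.Subsingleton := by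
      intro a ha b hb
      exact heInj ha.1 hb.1 (ha.2.trans hb.2.symm)
    exact this.finite
  · have hsub : {x ∈ C | φ x ∈ J} ⊆ {x ∈ 𝒰 | ψ x ∈ J} := by
      intro x hx
      exact ⟨hC hx.1, by rw [hψC x hx.1]; exact hx.2⟩
    exact kcovers_mono h𝒰.1.1 (hJ J hJ') hsub (fun x hx => hx.1)

end Generic
end S7

set_option linter.unusedSectionVars false
namespace S7
section Hyper
variable {X : Type u} [TopologicalSpace X]

def up (U : Set X) : Set (HyperK X) := {K : HyperK X | K.1 ⊆ U}
def hit (U : Set X) : Set (HyperK X) := {K : HyperK X | (K.1 ∩ U).Nonempty}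

def SB (X : Type u) [TopologicalSpace X] : Set (Set (HyperK X)) :=
  {S | ∃ U : Set X, IsOpen U ∧
      (S = {K : HyperK X | K.1 ⊆ U} ∨ S = {K : HyperK X | (K.1 ∩ U).Nonempty})}

lemma hyper_eq_generateFrom :
    (Hyper.topologicalSpace X {K : Set X | IsCompact K ∧ K.Nonempty}) =
      TopologicalSpace.generateFrom (SB X) := rfl

lemma isOpen_up {U : Set X} (hU : IsOpen U) : IsOpen (up (X := X) U) :=
  TopologicalSpace.GenerateOpen.basic _ ⟨U, hU, Or.inl rfl⟩

lemma isOpen_hit {U : Set X} (hU : IsOpen U) : IsOpen (hit (X := X) U) :=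
  TopologicalSpace.GenerateOpen.basic _ ⟨U, hU, Or.inr rfl⟩

def sing (x : X) : HyperK X := ⟨{x}, isCompact_singleton, Set.singleton_nonempty x⟩

lemma up_inj : Function.Injective (up (X := X)) := by
  intro U V h
  ext x
  constructor
  · intro hx
    have : sing x ∈ up U := by exact Set.singleton_subset_iff.mpr hx
    rw [h] at this; exact Set.singleton_subset_iff.mp this
  · intro hx
    have : sing x ∈ up V := by exact Set.singleton_subset_iff.mpr hx
    rw [← h] at this; exact Set.singleton_subset_iff.mp this

variable [T2Space X]

lemma nonempty_of_noncompact (hX : ¬ CompactSpace X) : Nonempty X := by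
  by_contra h
  have : IsEmpty X := not_nonempty_iff.mp h
  exact hX ⟨by simp [Set.univ_eq_empty_iff.2 this]⟩

lemma compact_ne_univ (hX : ¬ CompactSpace X) {K : Set X} (hK : IsCompact K) : K ≠ Set.univ := by
  intro h
  exact hX ⟨h ▸ hK⟩

/-- Every compact set is contained in a proper open set. -/
lemma proper_nbhd (hX : ¬ CompactSpace X) {K : Set X} (hK : IsCompact K) :
    ∃ U : Set X, IsOpen U ∧ K ⊆ U ∧ U ≠ Set.univ := by
  obtain ⟨x, hx⟩ := Set.ne_univ_iff_exists_notMem K |>.mp (compact_ne_univ hX hK)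
  obtain ⟨U, V, hU, hV, hKU, hxV, hd⟩ :=
    SeparatedNhds.of_isCompact_isCompact hK isCompact_singleton (by simpa using hx)
  refine ⟨U, hU, hKU, ?_⟩
  intro h
  exact (hd.ne_of_mem (h ▸ Set.mem_univ x) (hxV rfl)) rfl

/-- The "hat" of a k-cover of `X` is a k-cover (in particular an open cover) of `𝕂(X)`. -/
lemma hat_mem_props {𝒰 : Set (Set X)} (h : 𝒰 ∈ KCovers X) :
    ∀ V ∈ up '' 𝒰, IsOpen V ∧ V.Nonempty ∧ V ≠ (Set.univ : Set (HyperK X)) := by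
  rintro - ⟨U, hU, rfl⟩
  obtain ⟨hUo, hUne, hUp⟩ := h.1.1 U hU
  obtain ⟨x, hx⟩ := hUne
  obtain ⟨y, hy⟩ := Set.ne_univ_iff_exists_notMem U |>.mp hUp
  refine ⟨isOpen_up hUo, ⟨sing x, Set.singleton_subset_iff.mpr hx⟩, ?_⟩
  intro hcon
  have : sing y ∈ up U := hcon ▸ Set.mem_univ _
  exact hy (Set.singleton_subset_iff.mp this)

lemma hat_cover {𝒰 : Set (Set X)} (h : 𝒰 ∈ KCovers X) :
    (up '' 𝒰) ∈ OX (HyperK X) := by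
  refine ⟨hat_mem_props h, ?_⟩
  ext K
  simp only [Set.mem_univ, iff_true, Set.mem_sUnion]
  obtain ⟨U, hU, hKU⟩ := h.2 K.1 K.2.1 K.2.2
  exact ⟨up U, ⟨U, hU, rfl⟩, hKU⟩

/-- The union of a compact family of compact sets is compact. -/
lemma union_compact {𝔎 : Set (HyperK X)} (h : IsCompact 𝔎) :
    IsCompact (⋃ K ∈ 𝔎, (K : HyperK X).1) := by
  refine isCompact_of_finite_subcover ?_
  intro ι U hUo hcov
  have hKsub : ∀ K : HyperK X, K ∈ 𝔎 → ∃ t : Finset ι, K.1 ⊆ ⋃ i ∈ t, U i := by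
    intro K hK
    exact K.2.1.elim_finite_subcover U hUo (fun x hx => hcov (Set.mem_biUnion hK hx))
  classical
  choose! t ht using hKsub
  have hcov2 : 𝔎 ⊆ ⋃ K : ↥𝔎, up (⋃ i ∈ t K.1, U i) := by
    intro K hK
    exact Set.mem_iUnion.2 ⟨⟨K, hK⟩, ht K hK⟩
  obtain ⟨T, hT⟩ := h.elim_finite_subcover (fun K : ↥𝔎 => up (⋃ i ∈ t K.1, U i))
    (fun K => isOpen_up (isOpen_biUnion (fun i _ => hUo i))) hcov2
  refine ⟨T.biUnion (fun K => t K.1), ?_⟩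
  intro x hx
  obtain ⟨K₀, hK₀mem, hxK₀⟩ := by
    simpa only [Set.mem_iUnion] using hx
  obtain ⟨K, hKT, hK⟩ := by
    simpa only [Set.mem_iUnion] using hT hK₀mem
  have : x ∈ ⋃ i ∈ t K.1, U i := hK hxK₀
  simp only [Set.mem_iUnion] at this ⊢
  obtain ⟨i, hit', hxi⟩ := this
  exact ⟨i, Finset.mem_biUnion.2 ⟨K, hKT, hit'⟩, hxi⟩

end Hyper
end S7

namespace S7
set_option linter.unusedSectionVars false
section CompA
variable {X : Type u} [TopologicalSpace X] [T2Space X]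

/-- (A): the nonempty compact subsets of a compact set form a Vietoris-compact family. -/
lemma isCompact_kset {K : Set X} (hK : IsCompact K) :
    IsCompact {L : HyperK X | L.1 ⊆ K} := by
  rw [isCompact_iff_ultrafilter_le_nhds]
  intro f hf
  have hCf : {L : HyperK X | L.1 ⊆ K} ∈ f := Filter.le_principal_iff.mp hf
  set L₀ : Set X := {x | x ∈ K ∧ ∀ W : Set X, IsOpen W → x ∈ W → hit W ∈ f} with hL₀
  have hclosed : IsClosed L₀ := by
    rw [← isOpen_compl_iff, isOpen_iff_forall_mem_open]
    intro x hx
    by_cases hxK : x ∈ K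
    · have : ¬ ∀ W : Set X, IsOpen W → x ∈ W → hit W ∈ f := fun h => hx ⟨hxK, h⟩
      push_neg at this
      obtain ⟨W, hWo, hxW, hWf⟩ := this
      exact ⟨W, fun z hz hzL => hWf (hzL.2 W hWo hz), hWo, hxW⟩
    · exact ⟨Kᶜ, fun z hz hzL => hz hzL.1, hK.isClosed.isOpen_compl, hxK⟩
  have hLK : L₀ ⊆ K := fun x hx => hx.1
  have hLcomp : IsCompact L₀ := hK.of_isClosed_subset hclosed hLK
  have hLne : L₀.Nonempty := by
    by_contra hne
    rw [Set.not_nonempty_iff_eq_empty] at hne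
    have hWx : ∀ x : ↥K, ∃ W : Set X, IsOpen W ∧ (x : X) ∈ W ∧ hit W ∉ f := by
      intro x
      have hx : (x : X) ∉ L₀ := by rw [hne]; exact Set.notMem_empty _
      have : ¬ ((x : X) ∈ K ∧ ∀ W : Set X, IsOpen W → (x : X) ∈ W → hit W ∈ f) := hx
      push_neg at this
      obtain ⟨W, hWo, hxW, hWf⟩ := this x.2
      exact ⟨W, hWo, hxW, hWf⟩
    choose W hWo hWmem hWf using hWx
    obtain ⟨T, hT⟩ := hK.elim_finite_subcover (fun x : ↥K => W x)
      (fun x => hWo x) (fun x hx => Set.mem_iUnion.2 ⟨⟨x, hx⟩, hWmem ⟨x, hx⟩⟩)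
    have hD : {L : HyperK X | L.1 ⊆ K} ∩ ⋂ x ∈ T, (hit (W x))ᶜ ∈ f := by
      refine Filter.inter_mem hCf ?_
      refine (Filter.biInter_mem T.finite_toSet).mpr ?_
      intro x _
      exact Ultrafilter.compl_mem_iff_notMem.2 (hWf x)
    obtain ⟨L, hL1, hL2⟩ := Ultrafilter.nonempty_of_mem hD
    obtain ⟨z, hz⟩ := L.2.2
    obtain ⟨x, hxT, hzW⟩ := by
      simpa only [Set.mem_iUnion] using hT (hL1 hz)
    have : L ∈ (hit (W x))ᶜ := by
      simp only [Set.mem_iInter] at hL2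
      exact hL2 x hxT
    exact this ⟨z, hz, hzW⟩
  refine ⟨⟨L₀, hLcomp, hLne⟩, hLK, ?_⟩
  have key : ∀ s : Set (HyperK X), TopologicalSpace.GenerateOpen (SB X) s →
      (⟨L₀, hLcomp, hLne⟩ : HyperK X) ∈ s → s ∈ f := by
    intro s hs
    induction hs with
    | basic t ht =>
      intro hmem
      obtain ⟨U, hUo, hcase | hcase⟩ := ht
      · subst hcase
        have hLU : L₀ ⊆ U := hmem
        by_cases hKU : K ⊆ U
        · exact Filter.mem_of_superset hCf (fun L hL => hL.trans hKU)
        · by_contra hupf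
          have hdiffc : IsCompact (K \ U) := hK.inter_right hUo.isClosed_compl
          have hWy : ∀ y : ↥(K \ U), ∃ W : Set X, IsOpen W ∧ (y : X) ∈ W ∧ hit W ∉ f := by
            intro y
            have hy1 : (y : X) ∈ K := y.2.1
            have hy2 : (y : X) ∉ U := y.2.2
            have hy3 : (y : X) ∉ L₀ := fun h => hy2 (hLU h)
            have : ¬ ((y : X) ∈ K ∧ ∀ W : Set X, IsOpen W → (y : X) ∈ W → hit W ∈ f) := hy3
            push_neg at this
            obtain ⟨W, hWo, hyW, hWf⟩ := this hy1
            exact ⟨W, hWo, hyW, hWf⟩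
          choose W hWo hWm hWf using hWy
          obtain ⟨T, hT⟩ := hdiffc.elim_finite_subcover (fun y : ↥(K \ U) => W y)
            (fun y => hWo y) (fun y hy => Set.mem_iUnion.2 ⟨⟨y, hy⟩, hWm ⟨y, hy⟩⟩)
          have hD : {L : HyperK X | L.1 ⊆ K} ∩ ((⋂ y ∈ T, (hit (W y))ᶜ) ∩
              {L : HyperK X | L.1 ⊆ U}ᶜ) ∈ f := by
            refine Filter.inter_mem hCf (Filter.inter_mem ?_ ?_)
            · refine (Filter.biInter_mem T.finite_toSet).mpr ?_
              intro y _
              exact Ultrafilter.compl_mem_iff_notMem.2 (hWf y)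
            · exact Ultrafilter.compl_mem_iff_notMem.2 hupf
          obtain ⟨L, hL1, hL2, hL3⟩ := Ultrafilter.nonempty_of_mem hD
          have : ¬ (L.1 ⊆ U) := hL3
          obtain ⟨z, hzL, hzU⟩ := Set.not_subset.mp this
          obtain ⟨y, hyT, hzW⟩ := by
            simpa only [Set.mem_iUnion] using hT ⟨hL1 hzL, hzU⟩
          simp only [Set.mem_iInter] at hL2
          exact (hL2 y hyT) ⟨z, hzL, hzW⟩
      · subst hcase
        obtain ⟨x, hxL, hxU⟩ := hmem
        exact hxL.2 U hUo hxU
    | univ => exact fun _ => Filter.univ_mem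
    | inter t1 t2 h1 h2 ih1 ih2 => exact fun hmem => Filter.inter_mem (ih1 hmem.1) (ih2 hmem.2)
    | sUnion S hS ih =>
      intro hmem
      obtain ⟨t, htS, hEt⟩ := hmem
      exact Filter.mem_of_superset (ih t htS hEt) (Set.subset_sUnion_of_mem htS)
  intro s hs
  obtain ⟨t, hts, hto, hEt⟩ := mem_nhds_iff.mp hs
  exact Filter.mem_of_superset (key t hto hEt) hts

end CompA
end S7

namespace S7
set_option linter.unusedSectionVars false
section TubeB
variable {X : Type u} [TopologicalSpace X] [T2Space X]

def Bas (A : Set X) (𝒲 : Set (Set X)) : Set (HyperK X) :=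
  {L : HyperK X | L.1 ⊆ A ∧ ∀ W ∈ 𝒲, (L.1 ∩ W).Nonempty}

lemma isOpen_Bas {A : Set X} (hA : IsOpen A) {𝒲 : Set (Set X)} (h𝒲 : 𝒲.Finite)
    (ho : ∀ W ∈ 𝒲, IsOpen W) : IsOpen (Bas A 𝒲) := by
  have : Bas A 𝒲 = up A ∩ ⋂ W ∈ 𝒲, hit W := by
    ext L
    simp [Bas, up, hit, Set.mem_iInter]
  rw [this]
  exact (isOpen_up hA).inter (h𝒲.isOpen_biInter (fun W hW => isOpen_hit (ho W hW)))

lemma basic_refine {O : Set (HyperK X)} (hO : IsOpen O) {L : HyperK X} (hL : L ∈ O) :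
    ∃ A : Set X, ∃ 𝒲 : Set (Set X), IsOpen A ∧ 𝒲.Finite ∧ (∀ W ∈ 𝒲, IsOpen W) ∧
      L ∈ Bas A 𝒲 ∧ Bas A 𝒲 ⊆ O := by
  classical
  obtain ⟨v, hv, hLv, hvO⟩ :=
    (TopologicalSpace.isTopologicalBasis_of_subbasis
      (hyper_eq_generateFrom (X := X))).exists_subset_of_mem_open hL hO
  obtain ⟨f, ⟨hffin, hfsub⟩, rfl⟩ := hv
  have hex : ∀ S ∈ f, ∃ U : Set X, IsOpen U ∧
      (S = {K : HyperK X | K.1 ⊆ U} ∨ S = {K : HyperK X | (K.1 ∩ U).Nonempty}) :=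
    fun S hS => hfsub hS
  choose! u hu hc using hex
  set Fup : Set (Set (HyperK X)) := {S ∈ f | S = {K : HyperK X | K.1 ⊆ u S}} with hFup
  refine ⟨⋂₀ (u '' Fup), u '' (f \ Fup), ?_, ?_, ?_, ?_, ?_⟩
  · refine Set.Finite.isOpen_sInter ((hffin.subset (fun S hS => hS.1)).image u) ?_
    rintro - ⟨S, hS, rfl⟩
    exact hu S hS.1
  · exact hffin.diff.image u
  · rintro - ⟨S, hS, rfl⟩
    exact hu S hS.1
  · constructor
    · refine Set.subset_sInter ?_
      rintro - ⟨S, hS, rfl⟩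
      have : L ∈ S := (Set.mem_sInter.mp hLv) S hS.1
      rw [hS.2] at this
      exact this
    · rintro - ⟨S, hS, rfl⟩
      have hSm : L ∈ S := (Set.mem_sInter.mp hLv) S hS.1
      have : S = {K : HyperK X | (K.1 ∩ u S).Nonempty} := by
        rcases hc S hS.1 with h | h
        · exact absurd ⟨hS.1, h⟩ hS.2
        · exact h
      rw [this] at hSm
      exact hSm
  · intro L' hL'
    refine hvO (Set.mem_sInter.mpr (fun S hS => ?_))
    by_cases hSF : S ∈ Fup
    · have hmemu : u S ∈ u '' Fup := ⟨S, hSF, rfl⟩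
      rw [hSF.2]
      exact fun z hz => (Set.sInter_subset_of_mem hmemu) (hL'.1 hz)
    · have : S = {K : HyperK X | (K.1 ∩ u S).Nonempty} := by
        rcases hc S hS with h | h
        · exact absurd ⟨hS, h⟩ hSF
        · exact h
      rw [this]
      exact hL'.2 (u S) ⟨S, ⟨hS, hSF⟩, rfl⟩

/-- (B): the tube lemma for down-closed compact families in the Vietoris hyperspace. -/
lemma tube (hX : ¬ CompactSpace X) {K : Set X} (hK : IsCompact K) (hKne : K.Nonempty)
    {O : Set (HyperK X)} (hO : IsOpen O) (hsub : ∀ L : HyperK X, L.1 ⊆ K → L ∈ O) :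
    ∃ U : Set X, IsOpen U ∧ K ⊆ U ∧ U ≠ Set.univ ∧ ∀ L : HyperK X, L.1 ⊆ U → L ∈ O := by
  classical
  set CC : Set (HyperK X) := {L : HyperK X | L.1 ⊆ K} with hCC
  have hCCcomp : IsCompact CC := isCompact_kset hK
  have hdata : ∀ L : ↥CC, ∃ A : Set X, ∃ 𝒲 : Set (Set X), IsOpen A ∧ 𝒲.Finite ∧
      (∀ W ∈ 𝒲, IsOpen W) ∧ (L : HyperK X) ∈ Bas A 𝒲 ∧ Bas A 𝒲 ⊆ O :=
    fun L => basic_refine hO (hsub L.1 L.2)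
  choose A 𝒲 hAo h𝒲f h𝒲o hmemB hBsub using hdata
  obtain ⟨T, hT⟩ := hCCcomp.elim_finite_subcover (fun L : ↥CC => Bas (A L) (𝒲 L))
    (fun L => isOpen_Bas (hAo L) (h𝒲f L) (h𝒲o L))
    (fun L hL => Set.mem_iUnion_of_mem (⟨L, hL⟩ : ↥CC) (hmemB ⟨L, hL⟩))
  set walls : Set (Set X) := (A '' ↑T) ∪ (⋃ L ∈ T, 𝒲 L) with hwalls
  have hwallsfin : walls.Finite :=
    (T.finite_toSet.image A).union (T.finite_toSet.biUnion (fun L _ => h𝒲f L))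
  have hwallso : ∀ W ∈ walls, IsOpen W := by
    rintro W (⟨L, hL, rfl⟩ | hW)
    · exact hAo L
    · simp only [Set.mem_iUnion] at hW
      obtain ⟨L, hLT, hWL⟩ := hW
      exact h𝒲o L W hWL
  set N : X → Set X := fun x => ⋂₀ {W ∈ walls | x ∈ W} with hN
  have hNo : ∀ x, IsOpen (N x) :=
    fun x => Set.Finite.isOpen_sInter (hwallsfin.subset (fun W hW => hW.1))
      (fun W hW => hwallso W hW.1)
  have hNx : ∀ x, x ∈ N x := fun x => Set.mem_sInter.mpr (fun W hW => hW.2)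
  have hNsub : ∀ x (W : Set X), W ∈ walls → x ∈ W → N x ⊆ W :=
    fun x W hW hxW => Set.sInter_subset_of_mem ⟨hW, hxW⟩
  obtain ⟨t, ht⟩ := hK.elim_finite_subcover (fun x : ↥K => N x) (fun x => hNo x)
    (fun x hx => Set.mem_iUnion.2 ⟨⟨x, hx⟩, hNx x⟩)
  obtain ⟨Up, hUpo, hKUp, hUpne⟩ := proper_nbhd hX hK
  refine ⟨(⋃ x ∈ t, N (x : X)) ∩ Up, (isOpen_biUnion (fun (x : ↥K) (_ : x ∈ t) => hNo (x : X))).inter hUpo,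
    fun z hz => ⟨ht hz, hKUp hz⟩, ?_, ?_⟩
  · intro hcon
    apply hUpne
    rw [Set.eq_univ_iff_forall]
    intro z
    have : z ∈ (⋃ x ∈ t, N (x : X)) ∩ Up := hcon ▸ Set.mem_univ z
    exact this.2
  · intro L' hL'
    set T' : Set ↥K := {x : ↥K | x ∈ t ∧ (L'.1 ∩ N (x : X)).Nonempty} with hT'
    set F : Set X := Subtype.val '' T' with hF
    have hFfin : F.Finite := ((t.finite_toSet.subset (fun x hx => hx.1)).image _)
    have hFK : F ⊆ K := by rintro - ⟨x, hx, rfl⟩; exact x.2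
    have hFne : F.Nonempty := by
      obtain ⟨z, hz⟩ := L'.2.2
      have hzU : z ∈ ⋃ x ∈ t, N (x : X) := (hL' hz).1
      simp only [Set.mem_iUnion] at hzU
      obtain ⟨x, hxt, hzN⟩ := hzU
      exact ⟨x, ⟨x, ⟨hxt, ⟨z, hz, hzN⟩⟩, rfl⟩⟩
    set LF : HyperK X := ⟨F, hFfin.isCompact, hFne⟩ with hLF
    have hLFCC : LF ∈ CC := hFK
    have := hT hLFCC
    simp only [Set.mem_iUnion] at this
    obtain ⟨b, hbT, hLFB⟩ := this
    refine hBsub b ?_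
    constructor
    · -- L'.1 ⊆ A b
      intro z hz
      have hzU : z ∈ ⋃ x ∈ t, N (x : X) := (hL' hz).1
      simp only [Set.mem_iUnion] at hzU
      obtain ⟨x, hxt, hzN⟩ := hzU
      have hxT' : x ∈ T' := ⟨hxt, ⟨z, hz, hzN⟩⟩
      have hxF : (x : X) ∈ F := ⟨x, hxT', rfl⟩
      have hxA : (x : X) ∈ A b := hLFB.1 hxF
      have hAw : A b ∈ walls := Or.inl ⟨b, hbT, rfl⟩
      exact hNsub (x : X) (A b) hAw hxA hzN
    · -- hits every W ∈ 𝒲 b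
      intro W hW
      obtain ⟨xF, hxFF, hxFW⟩ := hLFB.2 W hW
      obtain ⟨x, hxT', rfl⟩ := hxFF
      have hWw : W ∈ walls := Or.inr (Set.mem_biUnion hbT hW)
      obtain ⟨z, hzL, hzN⟩ := hxT'.2
      exact ⟨z, hzL, hNsub (x : X) W hWw hxFW hzN⟩

end TubeB
end S7

namespace S7
set_option linter.unusedSectionVars false
open Classical in
lemma exists_enum {α : Type u} {s : Set α} (hc : s.Countable) (hi : s.Infinite) :
    ∃ e : ℕ → α, Function.Injective e ∧ Set.range e = s := by
  have h1 := hc.to_subtype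
  have h2 := hi.to_subtype
  obtain ⟨d⟩ := nonempty_denumerable_iff.mpr ⟨h1, h2⟩
  refine ⟨fun n => ((Denumerable.eqv (↥s)).symm n : α), ?_, ?_⟩
  · intro a b hab
    exact (Denumerable.eqv (↥s)).symm.injective (Subtype.ext hab)
  · ext x
    constructor
    · rintro ⟨n, rfl⟩
      exact ((Denumerable.eqv (↥s)).symm n).2
    · intro hx
      exact ⟨Denumerable.eqv (↥s) ⟨x, hx⟩, by simp⟩

section Blocks
variable {Z : Type u} [TopologicalSpace Z]

/-- Block construction: a per-inning index selection with increasing indices yields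
groupability of a countably enumerated k-cover. -/
lemma blocks_groupable {𝒱 : Set (Set Z)} (h𝒱 : 𝒱 ∈ KCovers Z)
    (e : ℕ → Set Z) (heinj : Function.Injective e) (hrange : Set.range e = 𝒱)
    (𝒢 : ℕ → Set ℕ) (h𝒢fin : ∀ k, (𝒢 k).Finite) (h𝒢ge : ∀ k, ∀ i ∈ 𝒢 k, k ≤ i)
    (hev : ∀ K : Set Z, IsCompact K → K.Nonempty → ∃ m, ∀ k ≥ m, ∃ i ∈ 𝒢 k, K ⊆ e i) :
    Groupable (KCovers Z) 𝒱 := by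
  classical
  set bnd : ℕ → ℕ := fun k => sSup (insert k (𝒢 k)) with hbnd
  have hbnd1 : ∀ k, ∀ i ∈ 𝒢 k, i ≤ bnd k := by
    intro k i hi
    exact le_csSup ((h𝒢fin k).insert k).bddAbove (Set.mem_insert_of_mem _ hi)
  have hbnd2 : ∀ k, k ≤ bnd k := by
    intro k
    exact le_csSup ((h𝒢fin k).insert k).bddAbove (Set.mem_insert _ _)
  set a : ℕ → ℕ := fun j => Nat.rec 0 (fun _ prev => max (prev + 1) (bnd prev + 1)) j with ha
  have ha0 : a 0 = 0 := rfl
  have haS : ∀ j, a (j + 1) = max (a j + 1) (bnd (a j) + 1) := fun j => rfl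
  have hamono : StrictMono a := by
    refine strictMono_nat_of_lt_succ (fun j => ?_)
    rw [haS]
    exact lt_of_lt_of_le (Nat.lt_succ_self _) (le_max_left _ _)
  have haj : ∀ j, j ≤ a j := by
    intro j
    induction j with
    | zero => exact le_of_eq ha0.symm
    | succ n ih =>
      rw [haS]
      exact le_trans (Nat.succ_le_succ ih) (le_max_left _ _)
  set block : ℕ → ℕ := fun i => Nat.findGreatest (fun j => a j ≤ i) i with hblock
  have hblock1 : ∀ i, a (block i) ≤ i := by
    intro i
    exact Nat.findGreatest_spec (P := fun j => a j ≤ i) (n := i) (m := 0) (Nat.zero_le i) (show a 0 ≤ i by rw [ha0]; exact Nat.zero_le i)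
  have hblock2 : ∀ i, i < a (block i + 1) := by
    intro i
    by_cases h : block i + 1 ≤ i
    · by_contra hcon
      exact (Nat.findGreatest_is_greatest (Nat.lt_succ_self _) h) (Nat.le_of_not_lt hcon)
    · have := haj (block i + 1)
      omega
  have hblockU : ∀ i j, a j ≤ i → i < a (j + 1) → block i = j := by
    intro i j h1 h2
    have hle : j ≤ block i := Nat.le_findGreatest (le_trans (haj j) h1) h1
    by_contra hne
    have : j + 1 ≤ block i := by omega
    have : a (j + 1) ≤ a (block i) := hamono.monotone this
    have := hblock1 i
    omega
  set idx : Set Z → ℕ := fun V => if h : ∃ i, e i = V then h.choose else 0 with hidx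
  have hidx1 : ∀ i, idx (e i) = i := by
    intro i
    have h : ∃ j, e j = e i := ⟨i, rfl⟩
    have := h.choose_spec
    simp only [hidx, dif_pos h]
    exact heinj this
  refine ⟨fun V => block (idx V), fun j => ?_, fun J hJ => ?_⟩
  · have hsub : {V ∈ 𝒱 | block (idx V) = j} ⊆ e '' (Set.Ico (a j) (a (j + 1))) := by
      intro V hV
      have : V ∈ Set.range e := hrange ▸ hV.1
      obtain ⟨i, rfl⟩ := this
      have h2 : block (idx (e i)) = j := hV.2
      rw [hidx1 i] at h2
      exact ⟨i, ⟨h2 ▸ hblock1 i, h2 ▸ hblock2 i⟩, rfl⟩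
    exact ((Set.finite_Ico _ _).image e).subset hsub
  · refine mem_kcovers (fun U hU => h𝒱.1.1 U hU.1) (fun K hK hKne => ?_)
    obtain ⟨m, hm⟩ := hev K hK hKne
    obtain ⟨j, hjJ, hjm⟩ := hJ.exists_gt m
    have hkm : m ≤ a j := le_trans (le_of_lt hjm) (haj j)
    obtain ⟨i, hi𝒢, hKei⟩ := hm (a j) hkm
    have hblocki : block i = j := by
      refine hblockU i j (h𝒢ge _ i hi𝒢) ?_
      calc i ≤ bnd (a j) := hbnd1 _ i hi𝒢
        _ < a (j + 1) := by rw [haS]; omega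
    refine ⟨e i, ⟨hrange ▸ Set.mem_range_self i, ?_⟩, hKei⟩
    show block (idx (e i)) ∈ J
    rw [hidx1 i, hblocki]
    exact hjJ

end Blocks
end S7

namespace S7
set_option linter.unusedSectionVars false
section Main
variable {X : Type u} [TopologicalSpace X] [T2Space X]

/-- The derived k-cover of `X` obtained from a k-cover of the hyperspace. -/
lemma derived_kcover (hX : ¬ CompactSpace X) {𝒱 : Set (Set (HyperK X))}
    (h𝒱 : 𝒱 ∈ KCovers (HyperK X)) :
    {U : Set X | IsOpen U ∧ U.Nonempty ∧ U ≠ Set.univ ∧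
      ∃ V ∈ 𝒱, ∀ L : HyperK X, L.1 ⊆ U → L ∈ V} ∈ KCovers X := by
  refine mem_kcovers (fun U hU => ⟨hU.1, hU.2.1, hU.2.2.1⟩) (fun K hK hKne => ?_)
  have hCC : IsCompact {L : HyperK X | L.1 ⊆ K} := isCompact_kset hK
  have hCCne : ({L : HyperK X | L.1 ⊆ K}).Nonempty := by
    refine ⟨⟨K, hK, hKne⟩, ?_⟩
    show K ⊆ K
    exact Set.Subset.rfl
  obtain ⟨V, hV𝒱, hCCV⟩ := h𝒱.2 _ hCC hCCne
  obtain ⟨U, hUo, hKU, hUne, hUV⟩ :=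
    tube hX hK hKne ((h𝒱.1.1 V hV𝒱).1) (fun L hL => hCCV hL)
  exact ⟨U, ⟨hUo, hKne.mono hKU, hUne, V, hV𝒱, hUV⟩, hKU⟩

/-- (H): per-inning Hurewicz-type selections for k-covers of `X`,
from the Hurewicz property of `𝕂(X)`. -/
lemma perInning (h1 : HurewiczProp (HyperK X)) (𝒰 : ℕ → Set (Set X))
    (h𝒰 : ∀ n, 𝒰 n ∈ KCovers X) :
    ∃ 𝒢 : ℕ → Set (Set X), (∀ n, 𝒢 n ⊆ 𝒰 n ∧ (𝒢 n).Finite) ∧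
      ∀ S : Set X, IsCompact S → S.Nonempty → ∃ m, ∀ n ≥ m, ∃ U ∈ 𝒢 n, S ⊆ U := by
  obtain ⟨ℱ, hℱ, hev⟩ := h1 (fun n => up '' 𝒰 n) (fun n => hat_cover (h𝒰 n))
  refine ⟨fun n => {U ∈ 𝒰 n | up U ∈ ℱ n}, fun n => ⟨fun U hU => hU.1, ?_⟩, ?_⟩
  · have : up '' {U ∈ 𝒰 n | up U ∈ ℱ n} ⊆ ℱ n := by
      rintro - ⟨U, hU, rfl⟩; exact hU.2
    exact Set.Finite.of_finite_image ((hℱ n).2.subset this) (up_inj.injOn)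
  · intro S hS hSne
    obtain ⟨m, hm⟩ := hev ⟨S, hS, hSne⟩
    refine ⟨m, fun n hn => ?_⟩
    obtain ⟨W, hWℱ, hKW⟩ := hm n hn
    obtain ⟨U, hU𝒰, rfl⟩ := (hℱ n).1 hWℱ
    exact ⟨U, ⟨hU𝒰, hWℱ⟩, hKW⟩

/-- (1) → S_fin(𝒦_X, 𝒦_X). -/
lemma imp1_sfinKK (h1 : HurewiczProp (HyperK X)) : Sfin (KCovers X) (KCovers X) := by
  intro 𝒰 h𝒰
  obtain ⟨𝒢, h𝒢, hev⟩ := perInning h1 𝒰 h𝒰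
  refine ⟨𝒢, h𝒢, mem_kcovers ?_ ?_⟩
  · intro U hU
    obtain ⟨n, hn⟩ := Set.mem_iUnion.mp hU
    exact (h𝒰 n).1.1 U ((h𝒢 n).1 hn)
  · intro K hK hKne
    obtain ⟨m, hm⟩ := hev K hK hKne
    obtain ⟨U, hU, hKU⟩ := hm m le_rfl
    exact ⟨U, Set.mem_iUnion.2 ⟨m, hU⟩, hKU⟩

/-- (1) → every countable k-cover of X is groupable. -/
lemma imp1_ctble_gp (hX : ¬ CompactSpace X) (h1 : HurewiczProp (HyperK X))
    {𝒰 : Set (Set X)} (h𝒰 : 𝒰 ∈ KCovers X) (hc : 𝒰.Countable) :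
    Groupable (KCovers X) 𝒰 := by
  have hne : Nonempty X := nonempty_of_noncompact hX
  obtain ⟨e, heinj, hrange⟩ := exists_enum hc (kcovers_infinite h𝒰)
  have htail : ∀ k : ℕ, 𝒰 \ (e '' Set.Iio k) ∈ KCovers X :=
    fun k => kcovers_diff_finite h𝒰 ((Set.finite_Iio k).image e)
  obtain ⟨𝒢X, h𝒢X, hev⟩ := perInning h1 _ htail
  have hidxge : ∀ k, ∀ U ∈ 𝒢X k, ∀ i, e i = U → k ≤ i := by
    intro k U hU i hei
    have : U ∈ 𝒰 \ (e '' Set.Iio k) := (h𝒢X k).1 hU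
    by_contra hik
    exact this.2 ⟨i, Set.mem_Iio.2 (Nat.lt_of_not_le hik), hei⟩
  classical
  set idx : Set X → ℕ := fun V => if h : ∃ i, e i = V then h.choose else 0 with hidx
  have hidx1 : ∀ i, idx (e i) = i := by
    intro i
    have h : ∃ j, e j = e i := ⟨i, rfl⟩
    have := h.choose_spec
    simp only [hidx, dif_pos h]
    exact heinj this
  refine blocks_groupable h𝒰 e heinj hrange (fun k => idx '' 𝒢X k)
    (fun k => ((h𝒢X k).2.image idx)) ?_ ?_
  · rintro k - ⟨U, hU, rfl⟩
    have hUu : U ∈ Set.range e := by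
      rw [hrange]; exact (Set.diff_subset) ((h𝒢X k).1 hU)
    obtain ⟨i, rfl⟩ := hUu
    rw [hidx1 i]
    exact hidxge k (e i) hU i rfl
  · intro K hK hKne
    obtain ⟨m, hm⟩ := hev K hK hKne
    refine ⟨m, fun k hk => ?_⟩
    obtain ⟨U, hU, hKU⟩ := hm k hk
    have hUu : U ∈ Set.range e := by
      rw [hrange]; exact (Set.diff_subset) ((h𝒢X k).1 hU)
    obtain ⟨i, rfl⟩ := hUu
    exact ⟨i, ⟨e i, hU, hidx1 i⟩, hKU⟩

/-- Implication (1) → (3). -/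
lemma imp13 (hX : ¬ CompactSpace X) (h1 : HurewiczProp (HyperK X)) :
    Sfin (KCovers X) (KCovers X) ∧
      groupables (KCovers X) = {𝒰 | 𝒰 ∈ KCovers X ∧ 𝒰.Countable} := by
  refine ⟨imp1_sfinKK h1, ?_⟩
  ext 𝒰
  constructor
  · rintro ⟨h𝒰, hgp⟩
    exact ⟨h𝒰, groupable_countable hgp⟩
  · rintro ⟨h𝒰, hc⟩
    exact ⟨h𝒰, imp1_ctble_gp hX h1 h𝒰 hc⟩

/-- Implication (3) → (4). -/
lemma imp34 (h3 : Sfin (KCovers X) (KCovers X) ∧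
    groupables (KCovers X) = {𝒰 | 𝒰 ∈ KCovers X ∧ 𝒰.Countable}) :
    Sfin (KCovers X) (groupables (KCovers X)) := by
  intro 𝒰 h𝒰
  obtain ⟨ℱ, hℱ, hC⟩ := h3.1 𝒰 h𝒰
  refine ⟨ℱ, hℱ, ?_⟩
  rw [h3.2]
  exact ⟨hC, Set.countable_iUnion (fun n => ((hℱ n).2).countable)⟩

end Main
end S7

namespace S7
set_option linter.unusedSectionVars false
section Main2
variable {X : Type u} [TopologicalSpace X] [T2Space X]

/-- (1) → every countable k-cover of `𝕂(X)` is groupable. -/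
lemma imp1_ctble_gp_Y (hX : ¬ CompactSpace X) (h1 : HurewiczProp (HyperK X))
    {𝒱 : Set (Set (HyperK X))} (h𝒱 : 𝒱 ∈ KCovers (HyperK X)) (hc : 𝒱.Countable) :
    Groupable (KCovers (HyperK X)) 𝒱 := by
  have hne : Nonempty X := nonempty_of_noncompact hX
  have hneY : Nonempty (HyperK X) := ⟨sing (Classical.choice hne)⟩
  obtain ⟨e, heinj, hrange⟩ := exists_enum hc (kcovers_infinite h𝒱)
  have htail : ∀ k : ℕ, 𝒱 \ (e '' Set.Iio k) ∈ KCovers (HyperK X) :=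
    fun k => kcovers_diff_finite h𝒱 ((Set.finite_Iio k).image e)
  set 𝒰 : ℕ → Set (Set X) := fun k => {U : Set X | IsOpen U ∧ U.Nonempty ∧ U ≠ Set.univ ∧
    ∃ V ∈ 𝒱 \ (e '' Set.Iio k), ∀ L : HyperK X, L.1 ⊆ U → L ∈ V} with h𝒰def
  have h𝒰 : ∀ k, 𝒰 k ∈ KCovers X := fun k => derived_kcover hX (htail k)
  obtain ⟨𝒢X, h𝒢X, hev⟩ := perInning h1 𝒰 h𝒰
  classical
  have hsel : ∀ k, ∀ U ∈ 𝒢X k, ∃ i, k ≤ i ∧ ∀ L : HyperK X, L.1 ⊆ U → L ∈ e i := by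
    intro k U hU
    obtain ⟨-, -, -, V, hV, hVL⟩ := (h𝒢X k).1 hU
    have : V ∈ Set.range e := hrange ▸ hV.1
    obtain ⟨i, rfl⟩ := this
    refine ⟨i, ?_, hVL⟩
    by_contra hik
    exact hV.2 ⟨i, Set.mem_Iio.2 (Nat.lt_of_not_le hik), rfl⟩
  choose! isel hisel1 hisel2 using hsel
  refine blocks_groupable h𝒱 e heinj hrange (fun k => (isel k) '' 𝒢X k)
    (fun k => ((h𝒢X k).2.image _)) ?_ ?_
  · rintro k - ⟨U, hU, rfl⟩
    exact hisel1 k U hU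
  · intro 𝔎 h𝔎 h𝔎ne
    have hS : IsCompact (⋃ K ∈ 𝔎, (K : HyperK X).1) := union_compact h𝔎
    have hSne : (⋃ K ∈ 𝔎, (K : HyperK X).1).Nonempty := by
      obtain ⟨K₀, hK₀⟩ := h𝔎ne
      obtain ⟨z, hz⟩ := K₀.2.2
      exact ⟨z, Set.mem_biUnion hK₀ hz⟩
    obtain ⟨m, hm⟩ := hev _ hS hSne
    refine ⟨m, fun k hk => ?_⟩
    obtain ⟨U, hU, hSU⟩ := hm k hk
    refine ⟨isel k U, ⟨U, hU, rfl⟩, ?_⟩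
    intro K hK
    exact hisel2 k U hU K (fun z hz => hSU (Set.mem_biUnion hK hz))

/-- Implication (1) → (2). -/
lemma imp12 (hX : ¬ CompactSpace X) (h1 : HurewiczProp (HyperK X)) :
    Sfin (KCovers (HyperK X)) (groupables (KCovers (HyperK X))) := by
  intro 𝒱 h𝒱
  set 𝒰 : ℕ → Set (Set X) := fun n => {U : Set X | IsOpen U ∧ U.Nonempty ∧ U ≠ Set.univ ∧
    ∃ V ∈ 𝒱 n, ∀ L : HyperK X, L.1 ⊆ U → L ∈ V} with h𝒰def
  have h𝒰 : ∀ n, 𝒰 n ∈ KCovers X := fun n => derived_kcover hX (h𝒱 n)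
  obtain ⟨ℱ, hℱ, hC⟩ := imp1_sfinKK h1 𝒰 h𝒰
  classical
  have hsel : ∀ n, ∀ U ∈ ℱ n, ∃ V, V ∈ 𝒱 n ∧ ∀ L : HyperK X, L.1 ⊆ U → L ∈ V := by
    intro n U hU
    obtain ⟨-, -, -, V, hV, hVL⟩ := (hℱ n).1 hU
    exact ⟨V, hV, hVL⟩
  choose! Vs hVs1 hVs2 using hsel
  have hsub : ∀ n, Vs n '' ℱ n ⊆ 𝒱 n := by
    rintro n - ⟨U, hU, rfl⟩; exact hVs1 n U hU
  have hCY : (⋃ n, Vs n '' ℱ n) ∈ KCovers (HyperK X) := by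
    refine mem_kcovers ?_ ?_
    · intro V hV
      obtain ⟨n, hn⟩ := Set.mem_iUnion.mp hV
      exact (h𝒱 n).1.1 V (hsub n hn)
    · intro 𝔎 h𝔎 h𝔎ne
      have hS : IsCompact (⋃ K ∈ 𝔎, (K : HyperK X).1) := union_compact h𝔎
      have hSne : (⋃ K ∈ 𝔎, (K : HyperK X).1).Nonempty := by
        obtain ⟨K₀, hK₀⟩ := h𝔎ne
        obtain ⟨z, hz⟩ := K₀.2.2
        exact ⟨z, Set.mem_biUnion hK₀ hz⟩
      obtain ⟨U, hUC, hSU⟩ := hC.2 _ hS hSne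
      obtain ⟨n, hn⟩ := Set.mem_iUnion.mp hUC
      refine ⟨Vs n U, Set.mem_iUnion.2 ⟨n, ⟨U, hn, rfl⟩⟩, ?_⟩
      intro K hK
      exact hVs2 n U hn K (fun z hz => hSU (Set.mem_biUnion hK hz))
  refine ⟨fun n => Vs n '' ℱ n, fun n => ⟨hsub n, (hℱ n).2.image _⟩, hCY, ?_⟩
  exact imp1_ctble_gp_Y hX h1 hCY
    (Set.countable_iUnion (fun n => ((hℱ n).2.image _).countable))

/-- Implication (2) → (4). -/
lemma imp24 (hX : ¬ CompactSpace X)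
    (h2 : Sfin (KCovers (HyperK X)) (groupables (KCovers (HyperK X)))) :
    Sfin (KCovers X) (groupables (KCovers X)) := by
  intro 𝒰 h𝒰
  have hhat : ∀ n, (up '' 𝒰 n) ∈ KCovers (HyperK X) := by
    intro n
    refine mem_kcovers (hat_mem_props (h𝒰 n)) ?_
    intro 𝔎 h𝔎 h𝔎ne
    have hS : IsCompact (⋃ K ∈ 𝔎, (K : HyperK X).1) := union_compact h𝔎
    have hSne : (⋃ K ∈ 𝔎, (K : HyperK X).1).Nonempty := by
      obtain ⟨K₀, hK₀⟩ := h𝔎ne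
      obtain ⟨z, hz⟩ := K₀.2.2
      exact ⟨z, Set.mem_biUnion hK₀ hz⟩
    obtain ⟨U, hU, hSU⟩ := (h𝒰 n).2 _ hS hSne
    refine ⟨up U, ⟨U, hU, rfl⟩, ?_⟩
    intro K hK
    exact fun z hz => hSU (Set.mem_biUnion hK hz)
  obtain ⟨ℱh, hℱh, hCh⟩ := h2 _ hhat
  obtain ⟨hChmem, Φ, hΦfin, hΦJ⟩ := hCh
  set ℱ : ℕ → Set (Set X) := fun n => {U ∈ 𝒰 n | up U ∈ ℱh n} with hℱdef
  have hfin : ∀ n, (ℱ n).Finite := by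
    intro n
    have : up '' ℱ n ⊆ ℱh n := by rintro - ⟨U, hU, rfl⟩; exact hU.2
    exact Set.Finite.of_finite_image ((hℱh n).2.subset this) (up_inj.injOn)
  have hmemC : ∀ U ∈ (⋃ n, ℱ n), IsOpen U ∧ U.Nonempty ∧ U ≠ Set.univ := by
    intro U hU
    obtain ⟨n, hn⟩ := Set.mem_iUnion.mp hU
    exact (h𝒰 n).1.1 U hn.1
  have hupC : ∀ U ∈ (⋃ n, ℱ n), up U ∈ (⋃ n, ℱh n) := by
    intro U hU
    obtain ⟨n, hn⟩ := Set.mem_iUnion.mp hU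
    exact Set.mem_iUnion.2 ⟨n, hn.2⟩
  have hdownC : ∀ V ∈ (⋃ n, ℱh n), ∃ U ∈ (⋃ n, ℱ n), V = up U := by
    intro V hV
    obtain ⟨n, hn⟩ := Set.mem_iUnion.mp hV
    obtain ⟨U, hU, rfl⟩ := (hℱh n).1 hn
    exact ⟨U, Set.mem_iUnion.2 ⟨n, ⟨hU, hn⟩⟩, rfl⟩
  refine ⟨ℱ, fun n => ⟨fun U hU => hU.1, hfin n⟩, ?_, ?_⟩
  · refine mem_kcovers hmemC ?_
    intro K hK hKne
    obtain ⟨V, hV, h𝔎V⟩ := hChmem.2 {⟨K, hK, hKne⟩} isCompact_singleton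
      (Set.singleton_nonempty _)
    obtain ⟨U, hUC, rfl⟩ := hdownC V hV
    exact ⟨U, hUC, h𝔎V rfl⟩
  · refine ⟨fun U => Φ (up U), fun m => ?_, fun J hJ => ?_⟩
    · have : up '' {U ∈ (⋃ n, ℱ n) | Φ (up U) = m} ⊆ {V ∈ (⋃ n, ℱh n) | Φ V = m} := by
        rintro - ⟨U, hU, rfl⟩
        exact ⟨hupC U hU.1, hU.2⟩
      exact Set.Finite.of_finite_image ((hΦfin m).subset this) (up_inj.injOn)
    · refine mem_kcovers (fun U hU => hmemC U hU.1) ?_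
      intro K hK hKne
      obtain ⟨V, hV, h𝔎V⟩ := (hΦJ J hJ).2 {⟨K, hK, hKne⟩} isCompact_singleton
        (Set.singleton_nonempty _)
      obtain ⟨U, hUC, rfl⟩ := hdownC V hV.1
      exact ⟨U, ⟨hUC, hV.2⟩, h𝔎V rfl⟩

end Main2
end S7

namespace S7
set_option linter.unusedSectionVars false
section Main3
variable {X : Type u} [TopologicalSpace X] [T2Space X]

/-- Implication (4) → (1). -/
lemma imp41 (hX : ¬ CompactSpace X) (h4 : Sfin (KCovers X) (groupables (KCovers X))) :
    HurewiczProp (HyperK X) := by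
  intro 𝒪 h𝒪
  classical
  set P : ℕ → Prop := fun n => ∃ F : Set (Set (HyperK X)),
    F ⊆ 𝒪 n ∧ F.Finite ∧ ⋃₀ F = Set.univ with hP
  set 𝒪' : ℕ → Set (Set (HyperK X)) := fun n =>
    {O | ∃ F : Set (Set (HyperK X)), F ⊆ 𝒪 n ∧ F.Finite ∧ F.Nonempty ∧
      O = ⋃₀ F ∧ O ≠ Set.univ} with h𝒪'def
  have h𝒪'open : ∀ i, ∀ O ∈ 𝒪' i, IsOpen O := by
    rintro i O ⟨F, hF𝒪, hFfin, hFne, rfl, hFuniv⟩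
    exact isOpen_sUnion (fun t ht => ((h𝒪 i).1 t (hF𝒪 ht)).1)
  have hbig : ∀ i, ¬ P i → ∀ K : Set X, IsCompact K → K.Nonempty →
      ∃ O ∈ 𝒪' i, ∀ L : HyperK X, L.1 ⊆ K → L ∈ O := by
    intro i hPi K hK hKne
    have hCC := isCompact_kset (X := X) hK
    obtain ⟨T, hT⟩ := hCC.elim_finite_subcover
      (fun O : ↥(𝒪 i) => (O : Set (HyperK X)))
      (fun O => ((h𝒪 i).1 O O.2).1)
      (by
        intro L _
        have : (L : HyperK X) ∈ ⋃₀ 𝒪 i := (h𝒪 i).2 ▸ Set.mem_univ L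
        obtain ⟨O, hO, hLO⟩ := this
        exact Set.mem_iUnion.2 ⟨⟨O, hO⟩, hLO⟩)
    have hKCC : (⟨K, hK, hKne⟩ : HyperK X) ∈ {L : HyperK X | L.1 ⊆ K} := by
      show K ⊆ K; exact Set.Subset.rfl
    set F : Set (Set (HyperK X)) := Subtype.val '' (T : Set ↥(𝒪 i)) with hF
    have hFeq : ⋃₀ F = ⋃ O ∈ T, (O : Set (HyperK X)) := by
      rw [hF, Set.sUnion_image]
      simp [Finset.mem_coe]
    have hFne : F.Nonempty := by
      have := hT hKCC
      obtain ⟨O, hOT, -⟩ := Set.mem_iUnion₂.mp this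
      exact ⟨O.1, O, hOT, rfl⟩
    have hFuniv : ⋃₀ F ≠ Set.univ := by
      intro hcon
      exact hPi ⟨F, by rintro - ⟨O, -, rfl⟩; exact O.2,
        (T.finite_toSet.image _), hcon⟩
    refine ⟨⋃₀ F, ⟨F, by rintro - ⟨O, -, rfl⟩; exact O.2,
      (T.finite_toSet.image _), hFne, rfl, hFuniv⟩, ?_⟩
    intro L hL
    rw [hFeq]
    exact hT hL
  set 𝒰 : ℕ → Set (Set X) := fun n => {U : Set X | IsOpen U ∧ U.Nonempty ∧ U ≠ Set.univ ∧
    ∀ i, i ≤ n → ¬ P i → ∃ O ∈ 𝒪' i, ∀ L : HyperK X, L.1 ⊆ U → L ∈ O} with h𝒰def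
  have h𝒰 : ∀ n, 𝒰 n ∈ KCovers X := by
    intro n
    refine mem_kcovers (fun U hU => ⟨hU.1, hU.2.1, hU.2.2.1⟩) ?_
    intro K hK hKne
    have htube : ∀ i : ℕ, ∃ U : Set X, IsOpen U ∧ K ⊆ U ∧ ((i ≤ n ∧ ¬ P i) →
        ∃ O ∈ 𝒪' i, ∀ L : HyperK X, L.1 ⊆ U → L ∈ O) := by
      intro i
      by_cases hi : i ≤ n ∧ ¬ P i
      · obtain ⟨O, hO𝒪', hOK⟩ := hbig i hi.2 K hK hKne
        obtain ⟨U, hUo, hKU, hUne, hUO⟩ := tube hX hK hKne (h𝒪'open i O hO𝒪') hOK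
        exact ⟨U, hUo, hKU, fun _ => ⟨O, hO𝒪', hUO⟩⟩
      · exact ⟨Set.univ, isOpen_univ, Set.subset_univ K, fun h => absurd h hi⟩
    choose g hg1 hg2 hg3 using htube
    obtain ⟨Up, hUpo, hKUp, hUpne⟩ := proper_nbhd hX hK
    refine ⟨(⋂ i ∈ Finset.range (n+1), g i) ∩ Up, ⟨?_, ?_, ?_, ?_⟩, ?_⟩
    · exact (isOpen_biInter_finset (fun i _ => hg1 i)).inter hUpo
    · refine hKne.mono ?_
      intro z hz
      exact ⟨Set.mem_iInter₂.2 (fun i _ => hg2 i hz), hKUp hz⟩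
    · intro hcon
      apply hUpne
      rw [Set.eq_univ_iff_forall]
      intro z
      have hz : z ∈ (⋂ i ∈ Finset.range (n+1), g i) ∩ Up := by
        rw [hcon]; exact Set.mem_univ z
      exact hz.2
    · intro i hin hPi
      obtain ⟨O, hO, hgO⟩ := hg3 i ⟨hin, hPi⟩
      refine ⟨O, hO, fun L hL => hgO L ?_⟩
      intro z hz
      have := (hL hz).1
      exact Set.mem_iInter₂.mp this i (Finset.mem_range.2 (Nat.lt_succ_of_le hin))
    · intro z hz
      exact ⟨Set.mem_iInter₂.2 (fun i _ => hg2 i hz), hKUp hz⟩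
  obtain ⟨ℱ, hℱ, hCgp⟩ := h4 𝒰 h𝒰
  obtain ⟨hCk, φ, hφfin, hφJ⟩ := hCgp
  set d : Set X → ℕ := fun U => if h : ∃ n, U ∈ ℱ n then Nat.find h else 0 with hd
  have hdmem : ∀ U ∈ (⋃ n, ℱ n), U ∈ ℱ (d U) := by
    intro U hU
    have h : ∃ n, U ∈ ℱ n := Set.mem_iUnion.mp hU
    simp only [hd, dif_pos h]
    exact Nat.find_spec h
  set B : ℕ → Set (Set X) := fun m => ⋃ n ∈ Set.Iio m, ℱ n with hB
  have hBfin : ∀ m, (B m).Finite :=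
    fun m => (Set.finite_Iio m).biUnion (fun n _ => (hℱ n).2)
  set ρ : ℕ → ℕ := fun m => m + 1 + sSup (insert 0 (φ '' B m)) with hρ
  have hρ1 : ∀ m, m ≤ ρ m := fun m => by simp only [hρ]; omega
  have hρ2 : ∀ m, ∀ U ∈ B m, φ U < ρ m := by
    intro m U hU
    have : φ U ≤ sSup (insert 0 (φ '' B m)) :=
      le_csSup (((hBfin m).image φ).insert 0).bddAbove
        (Set.mem_insert_of_mem _ ⟨U, hU, rfl⟩)
    simp only [hρ]; omega
  set Q : ℕ → Set (Set X) := fun m =>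
    {U | U ∈ (⋃ n, ℱ n) ∧ m ≤ d U ∧ φ U ≤ ρ m} with hQ
  have hQfin : ∀ m, (Q m).Finite := by
    intro m
    have : Q m ⊆ ⋃ j ∈ Set.Iic (ρ m), {x ∈ (⋃ n, ℱ n) | φ x = j} := by
      intro U hU
      exact Set.mem_biUnion hU.2.2 ⟨hU.1, rfl⟩
    exact ((Set.finite_Iic (ρ m)).biUnion (fun j _ => hφfin j)).subset this
  have hdecomp : ∀ m U, ∃ F : Set (Set (HyperK X)), ¬ P m → U ∈ Q m →
      F ⊆ 𝒪 m ∧ F.Finite ∧ ∀ L : HyperK X, L.1 ⊆ U → L ∈ ⋃₀ F := by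
    intro m U
    by_cases h : ¬ P m ∧ U ∈ Q m
    · have hU𝒰 : U ∈ 𝒰 (d U) := (hℱ (d U)).1 (hdmem U h.2.1)
      obtain ⟨O, hO, hUO⟩ := hU𝒰.2.2.2 m h.2.2.1 h.1
      obtain ⟨F, hF𝒪, hFfin, hFne, hOF, hFuniv⟩ := hO
      exact ⟨F, fun _ _ => ⟨hF𝒪, hFfin, fun L hL => hOF ▸ hUO L hL⟩⟩
    · exact ⟨∅, fun h1 h2 => absurd ⟨h1, h2⟩ h⟩
  choose Fd hFd using hdecomp
  have hPch : ∀ m, ∃ G : Set (Set (HyperK X)),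
      P m → G ⊆ 𝒪 m ∧ G.Finite ∧ ⋃₀ G = Set.univ := by
    intro m
    by_cases h : P m
    · obtain ⟨G, hG1, hG2, hG3⟩ := h
      exact ⟨G, fun _ => ⟨hG1, hG2, hG3⟩⟩
    · exact ⟨∅, fun hh => absurd hh h⟩
  choose Gp hGp using hPch
  set 𝒢 : ℕ → Set (Set (HyperK X)) := fun m =>
    if P m then Gp m else ⋃ U ∈ Q m, Fd m U with h𝒢
  refine ⟨𝒢, fun m => ?_, ?_⟩
  · by_cases hPm : P m
    · rw [h𝒢]
      simp only [if_pos hPm]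
      exact ⟨(hGp m hPm).1, (hGp m hPm).2.1⟩
    · rw [h𝒢]
      simp only [if_neg hPm]
      constructor
      · intro O hO
        obtain ⟨U, hUQ, hOF⟩ := by
          simpa only [Set.mem_iUnion] using hO
        exact (hFd m U hPm hUQ).1 hOF
      · refine (hQfin m).biUnion (fun U hUQ => (hFd m U hPm hUQ).2.1)
  · intro Kpt
    have hcofS := groupable_cofinite hφJ Kpt.2.1 Kpt.2.2
    obtain ⟨b, hb⟩ := hcofS.bddAbove
    refine ⟨b + 1, fun m hm => ?_⟩
    by_cases hPm : P m
    · have : ⋃₀ 𝒢 m = Set.univ := by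
        rw [h𝒢]; simp only [if_pos hPm]; exact (hGp m hPm).2.2
      exact this ▸ Set.mem_univ Kpt
    · have hρE : ρ m ∈ {n : ℕ | ∃ U ∈ (⋃ n, ℱ n), φ U = n ∧ Kpt.1 ⊆ U} := by
        by_contra hcon
        have : ρ m ≤ b := hb hcon
        have := hρ1 m
        omega
      obtain ⟨U, hUC, hφU, hSU⟩ := hρE
      have hdU : m ≤ d U := by
        by_contra hcon
        have hUB : U ∈ B m := Set.mem_biUnion (Set.mem_Iio.2 (Nat.lt_of_not_le hcon))
          (hdmem U hUC)
        have := hρ2 m U hUB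
        omega
      have hUQ : U ∈ Q m := ⟨hUC, hdU, le_of_eq hφU⟩
      have hKptF : Kpt ∈ ⋃₀ Fd m U := (hFd m U hPm hUQ).2.2 Kpt hSU
      obtain ⟨O, hOF, hKptO⟩ := hKptF
      refine ⟨O, ?_, hKptO⟩
      rw [h𝒢]
      simp only [if_neg hPm]
      exact Set.mem_biUnion hUQ hOF

end Main3
end S7

namespace S7
set_option linter.unusedSectionVars false

def playedL {α : Type u} (l : List (Set α)) : Set α := l.foldr (· ∪ ·) ∅

lemma playedL_nil {α : Type u} : playedL ([] : List (Set α)) = ∅ := rfl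

lemma playedL_cons {α : Type u} (F : Set α) (l : List (Set α)) :
    playedL (F :: l) = F ∪ playedL l := rfl

lemma playedL_append_single {α : Type u} (l : List (Set α)) (F : Set α) :
    playedL (l ++ [F]) = playedL l ∪ F := by
  induction l with
  | nil => simp [playedL]
  | cons G l ih =>
    show G ∪ playedL (l ++ [F]) = (G ∪ playedL l) ∪ F
    rw [ih, Set.union_assoc]

lemma playedL_finite {α : Type u} {l : List (Set α)} (h : ∀ F ∈ l, F.Finite) :
    (playedL l).Finite := by
  induction l with
  | nil => simp [playedL]
  | cons G l ih =>
    rw [playedL_cons]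
    exact (h G List.mem_cons_self).union (ih (fun F hF => h F (List.mem_cons_of_mem G hF)))

lemma subset_playedL {α : Type u} {l : List (Set α)} {F : Set α} (h : F ∈ l) :
    F ⊆ playedL l := by
  induction l with
  | nil => simp at h
  | cons G l ih =>
    rw [playedL_cons]
    rcases List.mem_cons.mp h with rfl | h
    · exact Set.subset_union_left
    · exact Set.subset_union_right.trans' (ih h)

variable {X : Type u} [TopologicalSpace X]

/-- The history along a (reversed) node of the game tree. -/
noncomputable def histA (σ : List (Set (Set X)) → Set (Set X))
    (csub : Set (Set X) → Set (Set X)) (efin : Set (Set X) → ℕ → Set (Set X)) :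
    List ℕ → List (Set (Set X))
  | [] => []
  | i :: s => histA σ csub efin s ++
      [efin (csub (σ (histA σ csub efin s) \ playedL (histA σ csub efin s))) i]

end S7

namespace S7
set_option linter.unusedSectionVars false
section Game
variable {X : Type u} [TopologicalSpace X] [T2Space X]

/-- Implication (4) → (5). -/
lemma imp45 (hX : ¬ CompactSpace X) (h4 : Sfin (KCovers X) (groupables (KCovers X))) :
    ¬ OneWinsGfin (KCovers X) (groupables (KCovers X)) := by
  have h1 : HurewiczProp (HyperK X) := imp41 hX h4
  have hsfin : Sfin (KCovers X) (KCovers X) := imp1_sfinKK h1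
  rintro ⟨σ, hσ, hwin⟩
  classical
  -- countable sub-k-cover selector
  have hcsub0 : ∀ 𝒜 : Set (Set X), ∃ C : Set (Set X), 𝒜 ∈ KCovers X →
      (C ⊆ 𝒜 ∧ C.Countable ∧ C ∈ KCovers X) := by
    intro 𝒜
    by_cases h𝒜 : 𝒜 ∈ KCovers X
    · obtain ⟨ℱ, hℱ, hC⟩ := hsfin (fun _ => 𝒜) (fun _ => h𝒜)
      exact ⟨⋃ n, ℱ n, fun _ => ⟨Set.iUnion_subset (fun n => (hℱ n).1),
        Set.countable_iUnion (fun n => (hℱ n).2.countable), hC⟩⟩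
    · exact ⟨∅, fun h => absurd h h𝒜⟩
  choose csub hcsub using hcsub0
  -- finite-subset enumerator
  have henum0 : ∀ 𝒜 : Set (Set X), ∃ g : ℕ → Set (Set X), 𝒜.Countable →
      (∀ i, g i ⊆ 𝒜 ∧ (g i).Finite) ∧
      (∀ F : Set (Set X), F ⊆ 𝒜 → F.Finite → ∃ i, g i = F) := by
    intro 𝒜
    by_cases h : 𝒜.Countable
    · have hctd : {F : Set (Set X) | F.Finite ∧ F ⊆ 𝒜}.Countable :=
        Set.countable_setOf_finite_subset h
      have hne : {F : Set (Set X) | F.Finite ∧ F ⊆ 𝒜}.Nonempty :=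
        ⟨∅, Set.finite_empty, Set.empty_subset _⟩
      obtain ⟨f, hf⟩ := hctd.exists_eq_range hne
      refine ⟨f, fun _ => ⟨fun i => ?_, fun F hF1 hF2 => ?_⟩⟩
      · have : f i ∈ {F : Set (Set X) | F.Finite ∧ F ⊆ 𝒜} := hf ▸ Set.mem_range_self i
        exact ⟨this.2, this.1⟩
      · have : F ∈ Set.range f := hf ▸ (⟨hF2, hF1⟩ : F ∈ {F | F.Finite ∧ F ⊆ 𝒜})
        exact this
    · exact ⟨fun _ => ∅, fun hc => absurd hc h⟩
  choose efin hefin using henum0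
  set hist : List ℕ → List (Set (Set X)) := histA σ csub efin with hhist
  set Cov : List ℕ → Set (Set X) :=
    fun s => csub (σ (hist s) \ playedL (hist s)) with hCov
  have hist_nil : hist [] = [] := rfl
  have hist_cons : ∀ i s, hist (i :: s) = hist s ++ [efin (Cov s) i] := fun i s => rfl
  -- the invariant
  have hInv : ∀ s : List ℕ, (∀ F ∈ hist s, F.Finite) ∧
      (σ (hist s) \ playedL (hist s)) ∈ KCovers X := by
    intro s
    induction s with
    | nil =>
      constructor
      · intro F hF; rw [hist_nil] at hF; simp at hF
      · rw [hist_nil, playedL_nil]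
        exact kcovers_diff_finite (hσ []) Set.finite_empty
    | cons i s ih =>
      have hCovs : Cov s ⊆ (σ (hist s) \ playedL (hist s)) ∧ (Cov s).Countable ∧
          Cov s ∈ KCovers X := hcsub _ ih.2
      have hnewfin : (efin (Cov s) i).Finite := ((hefin _ hCovs.2.1).1 i).2
      have hallfin : ∀ F ∈ hist (i :: s), F.Finite := by
        intro F hF
        rw [hist_cons] at hF
        rcases List.mem_append.mp hF with h | h
        · exact ih.1 F h
        · rw [List.mem_singleton.mp h]
          exact hnewfin
      exact ⟨hallfin, kcovers_diff_finite (hσ _) (playedL_finite hallfin)⟩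
  have hCovk : ∀ s, Cov s ⊆ (σ (hist s) \ playedL (hist s)) ∧ (Cov s).Countable ∧
      Cov s ∈ KCovers X := fun s => hcsub _ (hInv s).2
  -- apply per-inning selection to the enumerated game tree
  set dec : ℕ → List ℕ := fun j => Denumerable.ofNat (List ℕ) j with hdec
  obtain ⟨G, hG, hGev⟩ := perInning h1 (fun j => Cov (dec j)) (fun j => (hCovk _).2.2)
  -- the defeating branch
  have hbr : ∀ s : List ℕ, ∃ i : ℕ, efin (Cov s) i = G (Encodable.encode s) := by
    intro s
    have hGsub : G (Encodable.encode s) ⊆ Cov s := by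
      have h := (hG (Encodable.encode s)).1
      simpa only [hdec, Denumerable.ofNat_encode] using h
    exact (hefin _ (hCovk s).2.1).2 _ hGsub (hG _).2
  choose bri hbri using hbr
  set t : ℕ → List ℕ := fun n => Nat.rec [] (fun _ prev => bri prev :: prev) n with ht
  have ht0 : t 0 = [] := rfl
  have htS : ∀ n, t (n + 1) = bri (t n) :: t n := fun n => rfl
  have htlen : ∀ n, (t n).length = n := by
    intro n
    induction n with
    | zero => rfl
    | succ n ih => rw [htS, List.length_cons, ih]
  set Fmv : ℕ → Set (Set X) := fun n => G (Encodable.encode (t n)) with hFmv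
  have hmatch : ∀ n, hist (t n) = List.ofFn (fun i : Fin n => Fmv i) := by
    intro n
    induction n with
    | zero => rw [ht0]; rfl
    | succ n ih =>
      rw [htS, hist_cons, ih, hbri (t n)]
      rw [List.ofFn_succ']
      simp only [List.concat_eq_append, Fin.coe_castSucc, Fin.val_last]
      rfl
  have hFmvsub : ∀ n, Fmv n ⊆ Cov (t n) := by
    intro n
    have h := (hG (Encodable.encode (t n))).1
    simpa only [hdec, Denumerable.ofNat_encode] using h
  have hvalid : ∀ n, (Fmv n).Finite ∧ Fmv n ⊆ σ (List.ofFn fun i : Fin n => Fmv i) := by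
    intro n
    refine ⟨(hG _).2, ?_⟩
    rw [← hmatch n]
    exact (hFmvsub n).trans ((hCovk (t n)).1.trans Set.diff_subset)
  refine hwin Fmv hvalid ?_
  -- the union of moves is a groupable k-cover
  have hdisj : ∀ m n, m < n → ∀ U ∈ Fmv m, U ∉ Fmv n := by
    intro m n hmn U hUm hUn
    have hUpl : U ∈ playedL (hist (t n)) := by
      have hmem : Fmv m ∈ hist (t n) := by
        rw [hmatch n]
        exact List.mem_ofFn.mpr ⟨⟨m, hmn⟩, rfl⟩
      exact subset_playedL hmem hUm
    have := (hFmvsub n hUn)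
    exact ((hCovk (t n)).1 this).2 hUpl
  have hmemprops : ∀ U ∈ (⋃ n, Fmv n), IsOpen U ∧ U.Nonempty ∧ U ≠ Set.univ := by
    intro U hU
    obtain ⟨n, hn⟩ := Set.mem_iUnion.mp hU
    have : U ∈ σ (hist (t n)) := (((hCovk (t n)).1.trans Set.diff_subset)) (hFmvsub n hn)
    exact (hσ (hist (t n))).1.1 U this
  -- eventual capture along the branch
  have htinj : Function.Injective t := by
    intro m n hmn
    have := htlen m
    rw [hmn, htlen n] at this
    exact this.symm
  have hev2 : ∀ S : Set X, IsCompact S → S.Nonempty →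
      ∃ N, ∀ n ≥ N, ∃ U ∈ Fmv n, S ⊆ U := by
    intro S hS hSne
    obtain ⟨m₀, hm₀⟩ := hGev S hS hSne
    have hfin : {n : ℕ | Encodable.encode (t n) < m₀}.Finite := by
      refine Set.Finite.preimage ?_ (Set.finite_Iio m₀)
      exact Function.Injective.injOn (Encodable.encode_injective.comp htinj)
    obtain ⟨b, hb⟩ := hfin.bddAbove
    refine ⟨b + 1, fun n hn => ?_⟩
    have : m₀ ≤ Encodable.encode (t n) := by
      by_contra hcon
      have : n ≤ b := hb (Set.mem_setOf_eq ▸ Nat.lt_of_not_le hcon)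
      omega
    exact hm₀ _ this
  set φ : Set X → ℕ := fun U => if h : ∃ n, U ∈ Fmv n then Nat.find h else 0 with hφ
  have hφspec : ∀ n, ∀ U ∈ Fmv n, φ U = n := by
    intro n U hU
    have h : ∃ m, U ∈ Fmv m := ⟨n, hU⟩
    have h1 : U ∈ Fmv (Nat.find h) := Nat.find_spec h
    have h2 : Nat.find h ≤ n := Nat.find_le hU
    have h3 : Nat.find h = n := by
      rcases Nat.lt_or_ge (Nat.find h) n with hlt | hge
      · exact absurd hU (hdisj _ _ hlt U h1)
      · omega
    simp only [hφ, dif_pos h, h3]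
  refine ⟨?_, φ, ?_, ?_⟩
  · refine mem_kcovers hmemprops ?_
    intro K hK hKne
    obtain ⟨N, hN⟩ := hev2 K hK hKne
    obtain ⟨U, hU, hKU⟩ := hN N le_rfl
    exact ⟨U, Set.mem_iUnion.2 ⟨N, hU⟩, hKU⟩
  · intro n
    by_cases hn : ∃ U ∈ Fmv n, True
    · refine ((hG (Encodable.encode (t n))).2).subset ?_
      intro U hU
      obtain ⟨m, hm⟩ := Set.mem_iUnion.mp hU.1
      have heq : m = n := by rw [← hU.2, hφspec m U hm]
      exact show U ∈ Fmv n from heq ▸ hm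
    · refine Set.Finite.subset (Set.finite_empty) ?_
      intro U hU
      obtain ⟨m, hm⟩ := Set.mem_iUnion.mp hU.1
      have heq : m = n := by rw [← hU.2, hφspec m U hm]
      exact absurd ⟨U, heq ▸ hm, trivial⟩ hn
  · intro J hJ
    refine mem_kcovers (fun U hU => hmemprops U hU.1) ?_
    intro K hK hKne
    obtain ⟨N, hN⟩ := hev2 K hK hKne
    obtain ⟨n, hnJ, hnN⟩ := hJ.exists_gt N
    obtain ⟨U, hU, hKU⟩ := hN n (le_of_lt hnN)
    exact ⟨U, ⟨Set.mem_iUnion.2 ⟨n, hU⟩, (hφspec n U hU) ▸ hnJ⟩, hKU⟩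

/-- Implication (5) → (4). -/
lemma imp54 (h5 : ¬ OneWinsGfin (KCovers X) (groupables (KCovers X))) :
    Sfin (KCovers X) (groupables (KCovers X)) := by
  by_contra h4
  apply h5
  rw [Sfin] at h4
  push_neg at h4
  obtain ⟨𝒰, h𝒰, hbad⟩ := h4
  refine ⟨fun l => 𝒰 l.length, fun l => h𝒰 _, ?_⟩
  intro F hF
  refine hbad F (fun n => ?_)
  have h := hF n
  simp only [List.length_ofFn] at h
  exact ⟨h.2, h.1⟩

end Game
end S7

theorem statement7 {X : Type u} [TopologicalSpace X] [T2Space X] (hX : ¬ CompactSpace X) :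
    List.TFAE
      [HurewiczProp (HyperK X),
       Sfin (KCovers (HyperK X)) (groupables (KCovers (HyperK X))),
       Sfin (KCovers X) (KCovers X) ∧
         groupables (KCovers X) = {𝒰 | 𝒰 ∈ KCovers X ∧ 𝒰.Countable},
       Sfin (KCovers X) (groupables (KCovers X)),
       ¬ OneWinsGfin (KCovers X) (groupables (KCovers X))] := by
  tfae_have 1 → 3 := S7.imp13 hX
  tfae_have 3 → 4 := S7.imp34
  tfae_have 4 → 1 := S7.imp41 hX
  tfae_have 1 → 2 := S7.imp12 hX
  tfae_have 2 → 4 := S7.imp24 hX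
  tfae_have 4 → 5 := S7.imp45 hX
  tfae_have 5 → 4 := S7.imp54
  tfae_finish
end

section
/- The real line ℝ satisfies S_1(𝒦_ℝ, 𝒦_ℝ^gp): for every sequence ⟨𝒰_n : n ∈ ℕ⟩ of k-covers of ℝ there exist U_n ∈ 𝒰_n such that {U_n : n ∈ ℕ} is a groupable k-cover of ℝ. -/
open Set TopologicalSpace

universe u

lemma kc_avoid (𝒰 : Set (Set ℝ)) (h𝒰 : 𝒰 ∈ KCovers ℝ) (K : Set ℝ) (hK : IsCompact K)
    (hKne : K.Nonempty) (s : Set (Set ℝ)) (hs : s.Finite) :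
    ∃ U ∈ 𝒰, K ⊆ U ∧ U ∉ s := by
  classical
  obtain ⟨⟨hop, _⟩, hk⟩ := h𝒰
  have hpt : ∀ V : Set ℝ, ∃ x : ℝ, V ≠ Set.univ → x ∉ V := by
    intro V
    by_cases hV : V = Set.univ
    · exact ⟨0, fun h => absurd hV h⟩
    · obtain ⟨x, hx⟩ := Set.nonempty_compl.mpr hV
      exact ⟨x, fun _ => hx⟩
  choose p hp using hpt
  have hK'c : IsCompact (K ∪ (p '' s)) := hK.union (hs.image p).isCompact
  have hK'ne : (K ∪ (p '' s)).Nonempty := hKne.mono Set.subset_union_left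
  obtain ⟨U, hU𝒰, hUK'⟩ := hk _ hK'c hK'ne
  refine ⟨U, hU𝒰, Set.subset_union_left.trans hUK', ?_⟩
  intro hUs
  exact hp U (hop U hU𝒰).2.2 (hUK' (Or.inr ⟨U, hUs, rfl⟩))

lemma exists_selection (𝒰 : ℕ → Set (Set ℝ)) (h : ∀ n, 𝒰 n ∈ KCovers ℝ) :
    ∃ f : ℕ → Set ℝ, (∀ n, f n ∈ 𝒰 n) ∧ (∀ n : ℕ, Icc (-(n : ℝ)) n ⊆ f n) ∧
      Function.Injective f := by
  classical
  have hpick : ∀ (n : ℕ) (l : List (Set ℝ)),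
      ∃ U, U ∈ 𝒰 n ∧ Icc (-(n : ℝ)) n ⊆ U ∧ U ∉ l := by
    intro n l
    obtain ⟨U, h1, h2, h3⟩ := kc_avoid (𝒰 n) (h n) (Icc (-(n : ℝ)) n) isCompact_Icc
      ⟨0, by constructor <;> simp⟩ {V | V ∈ l} l.finite_toSet
    exact ⟨U, h1, h2, h3⟩
  choose pick hp1 hp2 hp3 using hpick
  let L : ℕ → List (Set ℝ) := fun n => Nat.rec [] (fun m lm => lm ++ [pick m lm]) n
  have hLsucc : ∀ n, L (n + 1) = L n ++ [pick n (L n)] := fun n => rfl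
  set f : ℕ → Set ℝ := fun n => pick n (L n) with hf
  have hmem : ∀ m n, m < n → f m ∈ L n := by
    intro m n hmn
    induction n with
    | zero => omega
    | succ k ih =>
      rw [hLsucc]
      rcases Nat.lt_succ_iff_lt_or_eq.mp hmn with h' | h'
      · exact List.mem_append_left _ (ih h')
      · subst h'; exact List.mem_append_right _ (List.mem_singleton_self _)
  refine ⟨f, fun n => hp1 n (L n), fun n => hp2 n (L n), ?_⟩
  intro a b hab
  rcases Nat.lt_trichotomy a b with h' | h' | h'
  · have := hmem a b h'
    rw [hab] at this
    exact absurd this (hp3 b (L b))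
  · exact h'
  · have := hmem b a h'
    rw [← hab] at this
    exact absurd this (hp3 a (L a))

lemma sub_kcover (𝒰 : ℕ → Set (Set ℝ)) (h : ∀ n, 𝒰 n ∈ KCovers ℝ) (f : ℕ → Set ℝ)
    (hf1 : ∀ n, f n ∈ 𝒰 n) (hf2 : ∀ n : ℕ, Icc (-(n : ℝ)) n ⊆ f n) (J : Set ℕ)
    (hJ : ∀ M : ℕ, ∃ n ∈ J, M ≤ n) : {U | ∃ n ∈ J, f n = U} ∈ KCovers ℝ := by
  have hprop : ∀ U ∈ {U | ∃ n ∈ J, f n = U}, IsOpen U ∧ U.Nonempty ∧ U ≠ Set.univ := by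
    rintro U ⟨n, _, rfl⟩
    exact (h n).1.1 (f n) (hf1 n)
  have hIccsub : ∀ (r : ℝ) (n : ℕ), r ≤ n → Icc (-r) r ⊆ f n := by
    intro r n hrn
    refine (Icc_subset_Icc (by linarith) hrn).trans (hf2 n)
  have hcov : ∀ (K : Set ℝ), IsCompact K → K.Nonempty →
      ∃ U ∈ {U | ∃ n ∈ J, f n = U}, K ⊆ U := by
    intro K hK hKne
    obtain ⟨r, hr⟩ := hK.isBounded.subset_closedBall 0
    obtain ⟨n, hnJ, hn⟩ := hJ ⌈r⌉₊
    refine ⟨f n, ⟨n, hnJ, rfl⟩, ?_⟩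
    have hrle : r ≤ (n : ℝ) := (Nat.le_ceil r).trans (by exact_mod_cast hn)
    intro x hx
    have := hr hx
    rw [Real.closedBall_eq_Icc] at this
    simp only [zero_sub, zero_add] at this
    exact hIccsub r n hrle this
  refine ⟨⟨hprop, ?_⟩, hcov⟩
  apply Set.eq_univ_of_forall
  intro x
  obtain ⟨n, hnJ, hn⟩ := hJ ⌈|x|⌉₊
  have hxabs : |x| ≤ (n : ℝ) := (Nat.le_ceil |x|).trans (by exact_mod_cast hn)
  have hxmem : x ∈ Icc (-(n : ℝ)) n := abs_le.mp hxabs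
  exact ⟨f n, ⟨n, hnJ, rfl⟩, hf2 n hxmem⟩

theorem statement8 : Sone (KCovers ℝ) (groupables (KCovers ℝ)) := by
  intro 𝒰 h𝒰
  obtain ⟨f, hf1, hf2, hfinj⟩ := exists_selection 𝒰 h𝒰
  have hrange : Set.range f = {U | ∃ n ∈ (Set.univ : Set ℕ), f n = U} := by
    ext U; simp [Set.range, eq_comm]
  refine ⟨f, hf1, ?_, ?_⟩
  · rw [hrange]
    exact sub_kcover 𝒰 h𝒰 f hf1 hf2 Set.univ (fun M => ⟨M, trivial, le_refl M⟩)
  · refine ⟨fun U => sInf {n | f n = U}, ?_, ?_⟩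
    · have hφ : ∀ n, sInf {m | f m = f n} = n := by
        intro n
        have : {m | f m = f n} = {n} := by
          ext m; simp [hfinj.eq_iff]
        rw [this, csInf_singleton]
      intro n
      refine Set.Finite.subset (Set.finite_singleton (f n)) ?_
      rintro U ⟨⟨m, rfl⟩, hm⟩
      simp only [Set.mem_singleton_iff]
      have hm2 : sInf {k | f k = f m} = n := hm
      rw [hφ m] at hm2
      rw [hm2]
    · intro J hJ
      have hφ : ∀ n, sInf {m | f m = f n} = n := by
        intro n
        have : {m | f m = f n} = {n} := by
          ext m; simp [hfinj.eq_iff]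
        rw [this, csInf_singleton]
      have hset : {x ∈ Set.range f | sInf {n | f n = x} ∈ J} = {U | ∃ n ∈ J, f n = U} := by
        ext U
        constructor
        · rintro ⟨⟨m, rfl⟩, hm⟩
          have hm2 : sInf {k | f k = f m} ∈ J := hm
          rw [hφ m] at hm2
          exact ⟨m, hm2, rfl⟩
        · rintro ⟨n, hnJ, rfl⟩
          refine ⟨⟨n, rfl⟩, ?_⟩
          rw [hφ n]; exact hnJ
      rw [hset]
      refine sub_kcover 𝒰 h𝒰 f hf1 hf2 J (fun M => ?_)
      obtain ⟨n, hn, hMn⟩ := hJ.exists_gt M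
      exact ⟨n, hn, hMn.le⟩
end

section
/- Let X be an infinite Hausdorff space. The following are equivalent: (i) 𝒫_fin(X) has the Hurewicz property; (ii) 𝒫_fin(X) satisfies S_fin(Ω_{𝒫_fin(X)}, Ω_{𝒫_fin(X)}^gp); (iii) X satisfies S_fin(Ω_X, Ω_X^gp); (iv) every finite power Xⁿ (n ≥ 1, with the product topology) has the Hurewicz property; (v) One does not have a winning strategy in the game G_fin(Ω_X, Ω_X^gp). -/
open Set TopologicalSpace

universe u

set_option linter.unusedSectionVars false

namespace S10

variable {Z : Type u} [TopologicalSpace Z]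

/-- finite power of a set -/
def powk (k : ℕ) (U : Set Z) : Set (Fin k → Z) := {p | ∀ i, p i ∈ U}

lemma powk_isOpen {k : ℕ} {U : Set Z} (hU : IsOpen U) : IsOpen (powk k U) := by
  have : powk k U = ⋂ i : Fin k, (fun p : Fin k → Z => p i) ⁻¹' U := by
    ext p; simp [powk]
  rw [this]
  exact isOpen_iInter_of_finite fun i => (continuous_apply (A := fun _ => Z) i).isOpen_preimage U hU

lemma powk_nonempty {k : ℕ} {U : Set Z} (hU : U.Nonempty) : (powk k U).Nonempty := by
  obtain ⟨x, hx⟩ := hU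
  exact ⟨fun _ => x, fun _ => hx⟩

lemma powk_ne_univ {k : ℕ} (hk : 1 ≤ k) {U : Set Z} (hU : U ≠ univ) : powk k U ≠ univ := by
  obtain ⟨x, hx⟩ := (Set.ne_univ_iff_exists_notMem U).1 hU
  intro h
  have : (fun _ : Fin k => x) ∈ powk k U := h ▸ mem_univ _
  exact hx (this ⟨0, hk⟩)

lemma powk_mono {k : ℕ} {U V : Set Z} (h : U ⊆ V) : powk k U ⊆ powk k V :=
  fun _ hp i => h (hp i)

lemma powk_finite {k : ℕ} {F : Set Z} (hF : F.Finite) : (powk k F).Finite := by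
  have : powk k F = Set.pi univ (fun _ : Fin k => F) := by
    ext p; simp [powk, Set.mem_pi]
  rw [this]
  exact Set.Finite.pi fun _ => hF

lemma mem_powk_range {k : ℕ} (p : Fin k → Z) {U : Set Z} :
    p ∈ powk k U ↔ range p ⊆ U := by
  constructor
  · rintro h x ⟨i, rfl⟩; exact h i
  · intro h i; exact h ⟨i, rfl⟩

/-- every ω-cover contains infinitely many supersets of any nonempty finite set -/
lemma omega_mult {𝒰 : Set (Set Z)} (h𝒰 : 𝒰 ∈ OmegaCovers Z) {F : Set Z}
    (hF : F.Finite) (hFne : F.Nonempty) : {U ∈ 𝒰 | F ⊆ U}.Infinite := by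
  intro hfin
  classical
  have : Nonempty Z := ⟨hFne.choose⟩
  have hpt : ∀ U ∈ {U ∈ 𝒰 | F ⊆ U}, ∃ x, x ∉ U := by
    intro U hU
    exact (Set.ne_univ_iff_exists_notMem U).1 (h𝒰.1.1 U hU.1).2.2
  choose! g hg using hpt
  set F' := F ∪ (g '' {U ∈ 𝒰 | F ⊆ U}) with hF'
  have hF'fin : F'.Finite := hF.union (hfin.image g)
  have hF'ne : F'.Nonempty := hFne.mono subset_union_left
  obtain ⟨U, hU, hsub⟩ := h𝒰.2 F' hF'fin hF'ne
  have hUmem : U ∈ {U ∈ 𝒰 | F ⊆ U} := ⟨hU, subset_union_left.trans hsub⟩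
  have : g U ∈ U := hsub (Or.inr ⟨U, hUmem, rfl⟩)
  exact hg U hUmem this

/-- enumeration of a finite nonempty set by a tuple -/
lemma exists_enum {F : Set Z} (hF : F.Finite) (hne : F.Nonempty) :
    ∃ k : ℕ, ∃ p : Fin (k + 1) → Z, range p = F := by
  classical
  obtain ⟨l, hl⟩ : ∃ l : List Z, ∀ x, x ∈ l ↔ x ∈ F := by
    refine ⟨hF.toFinset.toList, ?_⟩
    intro x; simp
  have hlne : l ≠ [] := by
    intro h
    obtain ⟨x, hx⟩ := hne
    have := (hl x).2 hx
    simp [h] at this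
  have hlen : 1 ≤ l.length := List.length_pos_iff.2 hlne
  refine ⟨l.length - 1, fun i => l.get ⟨i.1, by omega⟩, ?_⟩
  ext x
  constructor
  · rintro ⟨i, rfl⟩
    exact (hl _).1 (l.get_mem _)
  · intro hx
    obtain ⟨i, hi⟩ := List.mem_iff_get.1 ((hl x).2 hx)
    exact ⟨⟨i.1, by omega⟩, hi⟩

/-- disjoint groups with eventual capture give a groupable ω-cover -/
lemma groups_groupable (𝒢 : ℕ → Set (Set Z))
    (hfin : ∀ t, (𝒢 t).Finite)
    (hdisj : ∀ s t, s < t → ∀ U, U ∈ 𝒢 s → U ∉ 𝒢 t)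
    (hgood : ∀ t, ∀ U ∈ 𝒢 t, IsOpen U ∧ U.Nonempty ∧ U ≠ univ)
    (hcap : ∀ F : Set Z, F.Finite → F.Nonempty → ∃ m, ∀ t ≥ m, ∃ U ∈ 𝒢 t, F ⊆ U) :
    (⋃ t, 𝒢 t) ∈ groupables (OmegaCovers Z) := by
  classical
  set C := ⋃ t, 𝒢 t with hC
  have hmemC : ∀ U ∈ C, IsOpen U ∧ U.Nonempty ∧ U ≠ univ := by
    intro U hU
    obtain ⟨t, ht⟩ := mem_iUnion.1 hU
    exact hgood t U ht
  have hcover : ∀ x : Z, ∃ U ∈ C, x ∈ U := by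
    intro x
    obtain ⟨m, hm⟩ := hcap {x} (finite_singleton x) ⟨x, rfl⟩
    obtain ⟨U, hU, hxU⟩ := hm m le_rfl
    exact ⟨U, mem_iUnion.2 ⟨m, hU⟩, hxU rfl⟩
  have hCΩ : C ∈ OmegaCovers Z := by
    refine ⟨⟨fun U hU => hmemC U hU, ?_⟩, ?_⟩
    · apply eq_univ_iff_forall.2
      intro x
      obtain ⟨U, hU, hx⟩ := hcover x
      exact ⟨U, hU, hx⟩
    · intro F hF hFne
      obtain ⟨m, hm⟩ := hcap F hF hFne
      obtain ⟨U, hU, hsub⟩ := hm m le_rfl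
      exact ⟨U, mem_iUnion.2 ⟨m, hU⟩, hsub⟩
  refine ⟨hCΩ, ?_⟩
  set φ : Set Z → ℕ := fun U => if h : ∃ t, U ∈ 𝒢 t then Nat.find h else 0 with hφ
  have hφ_spec : ∀ U ∈ C, U ∈ 𝒢 (φ U) := by
    intro U hU
    obtain ⟨t, ht⟩ := mem_iUnion.1 hU
    have h : ∃ t, U ∈ 𝒢 t := ⟨t, ht⟩
    simp only [hφ, dif_pos h]
    exact Nat.find_spec h
  have hφ_eq : ∀ t, ∀ U ∈ 𝒢 t, φ U = t := by
    intro t U hU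
    have hUC : U ∈ C := mem_iUnion.2 ⟨t, hU⟩
    have h1 := hφ_spec U hUC
    rcases lt_trichotomy (φ U) t with h | h | h
    · exact absurd hU (hdisj _ _ h U h1)
    · exact h
    · exact absurd h1 (hdisj _ _ h U hU)
  refine ⟨φ, ?_, ?_⟩
  · intro n
    apply (hfin n).subset
    rintro U ⟨hUC, hUn⟩
    have := hφ_spec U hUC
    rwa [hUn] at this
  · intro J hJ
    have hsub : {U ∈ C | φ U ∈ J} ⊆ C := fun U hU => hU.1
    refine ⟨⟨fun U hU => hmemC U (hsub hU), ?_⟩, ?_⟩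
    · apply eq_univ_iff_forall.2
      intro x
      obtain ⟨m, hm⟩ := hcap {x} (finite_singleton x) ⟨x, rfl⟩
      obtain ⟨t, htJ, htm⟩ := hJ.exists_gt m
      obtain ⟨U, hU, hxU⟩ := hm t htm.le
      exact ⟨U, ⟨mem_iUnion.2 ⟨t, hU⟩, by rwa [hφ_eq t U hU]⟩, hxU rfl⟩
    · intro F hF hFne
      obtain ⟨m, hm⟩ := hcap F hF hFne
      obtain ⟨t, htJ, htm⟩ := hJ.exists_gt m
      obtain ⟨U, hU, hsub'⟩ := hm t htm.le
      exact ⟨U, ⟨mem_iUnion.2 ⟨t, hU⟩, by rwa [hφ_eq t U hU]⟩, hsub'⟩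

/-- from a groupable ω-cover, extract per-fiber eventual capture -/
lemma groupable_capture {C : Set (Set Z)} (h : C ∈ groupables (OmegaCovers Z)) :
    ∃ φ : Set Z → ℕ, (∀ n, {U ∈ C | φ U = n}.Finite) ∧
      ∀ F : Set Z, F.Finite → F.Nonempty →
        {n : ℕ | ¬ ∃ U ∈ C, φ U = n ∧ F ⊆ U}.Finite := by
  obtain ⟨hΩ, φ, hfin, hJ⟩ := h
  refine ⟨φ, hfin, ?_⟩
  intro F hF hFne
  by_contra hinf
  have hJ' := hJ _ hinf
  obtain ⟨U, hU, hsub⟩ := hJ'.2 F hF hFne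
  exact hU.2 ⟨U, hU.1, rfl, hsub⟩


/-- Hurewicz property for arbitrary open covers -/
def Hur' (Z : Type u) [TopologicalSpace Z] : Prop :=
  ∀ 𝒰 : ℕ → Set (Set Z), (∀ n, (∀ U ∈ 𝒰 n, IsOpen U) ∧ ⋃₀ 𝒰 n = univ) →
    ∃ ℱ : ℕ → Set (Set Z), (∀ n, ℱ n ⊆ 𝒰 n ∧ (ℱ n).Finite) ∧
      ∀ x : Z, ∃ m : ℕ, ∀ n ≥ m, x ∈ ⋃₀ ℱ n

lemma Hur'.toHurewicz {Z : Type u} [TopologicalSpace Z] (h : Hur' Z) : HurewiczProp Z := by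
  intro 𝒰 h𝒰
  exact h 𝒰 fun n => ⟨fun U hU => ((h𝒰 n).1 U hU).1, (h𝒰 n).2⟩

/-- bridge: for T1 nontrivial spaces, the non-trivial-cover Hurewicz property implies the
arbitrary-cover one -/
lemma hurewicz_bridge {Z : Type u} [TopologicalSpace Z] [T1Space Z] [Nontrivial Z]
    (h : HurewiczProp Z) : Hur' Z := by
  classical
  intro 𝒰 h𝒰
  set 𝒰' : ℕ → Set (Set Z) := fun n =>
    {S | ∃ U ∈ 𝒰 n, ∃ p : Z, S = U \ {p} ∧ S.Nonempty} with h𝒰'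
  have h𝒰'OX : ∀ n, 𝒰' n ∈ OX Z := by
    intro n
    constructor
    · rintro S ⟨U, hU, p, rfl, hne⟩
      refine ⟨((h𝒰 n).1 U hU).sdiff isClosed_singleton, hne, ?_⟩
      intro hcon
      have : p ∈ U \ {p} := hcon ▸ mem_univ p
      exact this.2 rfl
    · apply eq_univ_iff_forall.2
      intro x
      have hx : x ∈ ⋃₀ 𝒰 n := (h𝒰 n).2 ▸ mem_univ x
      obtain ⟨U, hU, hxU⟩ := hx
      obtain ⟨p, hp⟩ := exists_ne x
      refine ⟨U \ {p}, ⟨U, hU, p, rfl, ⟨x, hxU, ?_⟩⟩, hxU, ?_⟩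
      · simp [Ne.symm hp]
      · simp [Ne.symm hp]
  obtain ⟨ℱ', hℱ'sub, hcap⟩ := h 𝒰' h𝒰'OX
  set pick : ℕ → Set Z → Set Z := fun n S =>
    if h : ∃ U ∈ 𝒰 n, ∃ p : Z, S = U \ {p} ∧ S.Nonempty then h.choose else ∅ with hpick
  have hpick_spec : ∀ n, ∀ S ∈ 𝒰' n, pick n S ∈ 𝒰 n ∧ S ⊆ pick n S := by
    intro n S hS
    have h : ∃ U ∈ 𝒰 n, ∃ p : Z, S = U \ {p} ∧ S.Nonempty := hS
    simp only [hpick, dif_pos h]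
    obtain ⟨hU, p, hSp, -⟩ := h.choose_spec
    refine ⟨hU, fun x hx => ?_⟩
    rw [hSp] at hx
    exact hx.1
  refine ⟨fun n => pick n '' ℱ' n, ?_, ?_⟩
  · intro n
    exact ⟨by rintro V ⟨S, hS, rfl⟩; exact (hpick_spec n S ((hℱ'sub n).1 hS)).1,
      (hℱ'sub n).2.image _⟩
  · intro x
    obtain ⟨m, hm⟩ := hcap x
    refine ⟨m, fun n hn => ?_⟩
    obtain ⟨S, hS, hxS⟩ := hm n hn
    exact ⟨pick n S, ⟨S, hS, rfl⟩, (hpick_spec n S ((hℱ'sub n).1 hS)).2 hxS⟩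

/-- the arbitrary-cover Hurewicz property passes to continuous images -/
lemma Hur'.image {W Z : Type u} [TopologicalSpace W] [TopologicalSpace Z]
    (h : Hur' W) (g : W → Z) (hg : Continuous g) (hsurj : Function.Surjective g) :
    Hur' Z := by
  classical
  intro 𝒰 h𝒰
  set 𝒰' : ℕ → Set (Set W) := fun n => {T | ∃ U ∈ 𝒰 n, T = g ⁻¹' U} with h𝒰'
  have h𝒰'c : ∀ n, (∀ T ∈ 𝒰' n, IsOpen T) ∧ ⋃₀ 𝒰' n = univ := by
    intro n
    constructor
    · rintro T ⟨U, hU, rfl⟩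
      exact (h𝒰 n).1 U hU |>.preimage hg
    · apply eq_univ_iff_forall.2
      intro w
      have : g w ∈ ⋃₀ 𝒰 n := (h𝒰 n).2 ▸ mem_univ _
      obtain ⟨U, hU, hw⟩ := this
      exact ⟨g ⁻¹' U, ⟨U, hU, rfl⟩, hw⟩
  obtain ⟨𝒮, h𝒮, hcap⟩ := h 𝒰' h𝒰'c
  set pick : ℕ → Set W → Set Z := fun n T =>
    if h : ∃ U ∈ 𝒰 n, T = g ⁻¹' U then h.choose else ∅ with hpick
  have hpick_spec : ∀ n, ∀ T ∈ 𝒰' n, pick n T ∈ 𝒰 n ∧ T = g ⁻¹' (pick n T) := by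
    intro n T hT
    have h : ∃ U ∈ 𝒰 n, T = g ⁻¹' U := hT
    simp only [hpick, dif_pos h]
    exact h.choose_spec
  refine ⟨fun n => pick n '' 𝒮 n, ?_, ?_⟩
  · intro n
    exact ⟨by rintro V ⟨T, hT, rfl⟩; exact (hpick_spec n T ((h𝒮 n).1 hT)).1,
      (h𝒮 n).2.image _⟩
  · intro z
    obtain ⟨w, rfl⟩ := hsurj z
    obtain ⟨m, hm⟩ := hcap w
    refine ⟨m, fun n hn => ?_⟩
    obtain ⟨T, hT, hwT⟩ := hm n hn
    refine ⟨pick n T, ⟨T, hT, rfl⟩, ?_⟩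
    have := (hpick_spec n T ((h𝒮 n).1 hT)).2
    rw [this] at hwT
    exact hwT

/-- σ-union of continuous images of Hurewicz spaces is Hurewicz -/
lemma Hur'.sigma_union {Z : Type u} [TopologicalSpace Z] (W : ℕ → Type u)
    [∀ M, TopologicalSpace (W M)] (f : ∀ M, W M → Z)
    (hc : ∀ M, Continuous (f M)) (hH : ∀ M, Hur' (W M))
    (hcov : ∀ z : Z, ∃ M, z ∈ range (f M)) : Hur' Z := by
  classical
  intro 𝒰 h𝒰
  have hpb : ∀ M, ∀ n, (∀ T ∈ {T | ∃ U ∈ 𝒰 n, T = f M ⁻¹' U}, IsOpen T) ∧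
      ⋃₀ {T | ∃ U ∈ 𝒰 n, T = f M ⁻¹' U} = univ := by
    intro M n
    constructor
    · rintro T ⟨U, hU, rfl⟩
      exact (h𝒰 n).1 U hU |>.preimage (hc M)
    · apply eq_univ_iff_forall.2
      intro w
      have : f M w ∈ ⋃₀ 𝒰 n := (h𝒰 n).2 ▸ mem_univ _
      obtain ⟨U, hU, hw⟩ := this
      exact ⟨f M ⁻¹' U, ⟨U, hU, rfl⟩, hw⟩
  have hsel : ∀ M : ℕ, ∃ 𝒮 : ℕ → Set (Set (W M)),
      (∀ n, 𝒮 n ⊆ {T | ∃ U ∈ 𝒰 n, T = f M ⁻¹' U} ∧ (𝒮 n).Finite) ∧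
      ∀ w : W M, ∃ m, ∀ n ≥ m, w ∈ ⋃₀ 𝒮 n := by
    intro M
    exact hH M _ (hpb M)
  choose 𝒮 h𝒮 hScap using hsel
  set pick : ℕ → ℕ → Set Z := fun M n => ∅ with hpickdummy
  -- define per (M, n, T) a chosen U
  have hpickT : ∀ M n (T : Set (W M)), T ∈ 𝒮 M n → ∃ U ∈ 𝒰 n, T = f M ⁻¹' U := by
    intro M n T hT
    exact (h𝒮 M n).1 hT
  classical
  set pk : ∀ M, ℕ → Set (W M) → Set Z := fun M n T =>
    if h : ∃ U ∈ 𝒰 n, T = f M ⁻¹' U then h.choose else ∅ with hpk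
  have hpk_spec : ∀ M n (T : Set (W M)), T ∈ 𝒮 M n →
      pk M n T ∈ 𝒰 n ∧ T = f M ⁻¹' (pk M n T) := by
    intro M n T hT
    have h := hpickT M n T hT
    simp only [hpk, dif_pos h]
    exact h.choose_spec
  refine ⟨fun n => ⋃ M ∈ Finset.Iic n, pk M n '' 𝒮 M n, ?_, ?_⟩
  · intro n
    constructor
    · intro V hV
      simp only [mem_iUnion] at hV
      obtain ⟨M, -, T, hT, rfl⟩ := hV
      exact (hpk_spec M n T hT).1
    · apply Set.Finite.biUnion (Finset.Iic n).finite_toSet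
      intro M _
      exact ((h𝒮 M n).2).image _
  · intro z
    obtain ⟨M, w, rfl⟩ := hcov z
    obtain ⟨m, hm⟩ := hScap M w
    refine ⟨max m M, fun n hn => ?_⟩
    obtain ⟨T, hT, hwT⟩ := hm n (le_trans (le_max_left _ _) hn)
    refine ⟨pk M n T, ?_, ?_⟩
    · simp only [mem_iUnion]
      exact ⟨M, Finset.mem_Iic.2 (le_trans (le_max_right _ _) hn), T, hT, rfl⟩
    · have := (hpk_spec M n T hT).2
      rw [this] at hwT
      exact hwT

/-- the finite tube lemma -/
lemma finite_tube {Z : Type u} [TopologicalSpace Z] {k : ℕ} {F : Set Z} (hF : F.Finite)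
    {O : Set (Fin k → Z)} (hO : IsOpen O) (hsub : powk k F ⊆ O) :
    ∃ W : Set Z, IsOpen W ∧ F ⊆ W ∧ powk k W ⊆ O := by
  classical
  have hP : (powk k F).Finite := powk_finite hF
  have hbox : ∀ p ∈ powk k F, ∃ v : Fin k → Set Z, (∀ i, IsOpen (v i)) ∧
      (∀ i, p i ∈ v i) ∧ {q : Fin k → Z | ∀ i, q i ∈ v i} ⊆ O := by
    intro p hp
    obtain ⟨I, u, hu, hpi⟩ := isOpen_pi_iff.1 hO p (hsub hp)
    refine ⟨fun i => if i ∈ I then u i else univ, ?_, ?_, ?_⟩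
    · intro i
      by_cases h : i ∈ I
      · simpa [h] using (hu i h).1
      · simp [h]
    · intro i
      by_cases h : i ∈ I
      · simpa [h] using (hu i h).2
      · simp [h]
    · intro q hq
      apply hpi
      intro a ha
      rw [Finset.mem_coe] at ha
      simpa [ha] using hq a
  choose! v hv1 hv2 hv3 using hbox
  set Wx : Z → Set Z := fun x =>
    ⋂ p ∈ powk k F, ⋂ i : Fin k, (if p i = x then v p i else univ) with hWx
  have hWxopen : ∀ x, IsOpen (Wx x) := by
    intro x
    apply hP.isOpen_biInter
    intro p hp
    apply isOpen_iInter_of_finite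
    intro i
    split
    · exact hv1 p hp i
    · exact isOpen_univ
  have hxWx : ∀ x ∈ F, x ∈ Wx x := by
    intro x hx
    simp only [hWx, mem_iInter]
    intro p hp i
    split
    · next h => exact h ▸ hv2 p hp i
    · exact mem_univ _
  refine ⟨⋃ x ∈ F, Wx x, isOpen_biUnion fun x _ => hWxopen x, fun x hx => mem_biUnion hx (hxWx x hx), ?_⟩
  intro q hq
  have hgi : ∀ i : Fin k, ∃ x ∈ F, q i ∈ Wx x := by
    intro i
    have := hq i
    simpa only [mem_iUnion, exists_prop] using this
  choose g hg1 hg2 using hgi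
  have hgP : g ∈ powk k F := fun i => hg1 i
  apply hv3 g hgP
  intro i
  have := hg2 i
  simp only [hWx, mem_iInter] at this
  have h2 := this g hgP i
  rwa [if_pos rfl] at h2


/-- the cover of the `k`-th power by powers of intersections of at least `r+1` members -/
def IntPow (k r : ℕ) (𝒰 : Set (Set Z)) : Set (Set (Fin k → Z)) :=
  {S | ∃ 𝒯 : Set (Set Z), 𝒯 ⊆ 𝒰 ∧ 𝒯.Finite ∧ r + 1 ≤ 𝒯.ncard ∧ (⋂₀ 𝒯).Nonempty ∧
    S = powk k (⋂₀ 𝒯)}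

lemma IntPow_mem_OX {k r : ℕ} (hk : 1 ≤ k) {𝒰 : Set (Set Z)} (h𝒰 : 𝒰 ∈ OmegaCovers Z) :
    IntPow k r 𝒰 ∈ OX (Fin k → Z) := by
  haveI : Nonempty (Fin k) := ⟨⟨0, hk⟩⟩
  constructor
  · rintro S ⟨𝒯, hsub, hfin, hcard, hne, rfl⟩
    have h𝒯ne : 𝒯.Nonempty := by
      rcases 𝒯.eq_empty_or_nonempty with h | h
      · exfalso; rw [h] at hcard; simp [Set.ncard_empty] at hcard
      · exact h
    obtain ⟨U₀, hU₀⟩ := h𝒯ne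
    refine ⟨powk_isOpen (Finite.isOpen_sInter hfin fun U hU => (h𝒰.1.1 U (hsub hU)).1),
      powk_nonempty hne, powk_ne_univ hk ?_⟩
    intro hcon
    exact (h𝒰.1.1 U₀ (hsub hU₀)).2.2
      (eq_univ_of_univ_subset (hcon ▸ sInter_subset_of_mem hU₀))
  · apply eq_univ_iff_forall.2
    intro p
    have hF : (range p).Finite := finite_range p
    have hFne : (range p).Nonempty := range_nonempty p
    obtain ⟨t, htsub, htcard⟩ := (omega_mult h𝒰 hF hFne).exists_subset_card_eq (r + 1)
    have hFsub : range p ⊆ ⋂₀ (↑t : Set (Set Z)) := by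
      intro x hx
      apply mem_sInter.2
      intro U hU
      exact (htsub hU).2 hx
    refine ⟨powk k (⋂₀ (↑t : Set (Set Z))), ⟨↑t, fun U hU => (htsub hU).1, t.finite_toSet,
      ?_, hFne.mono hFsub, rfl⟩, (mem_powk_range p).2 hFsub⟩
    rw [Set.ncard_coe_finset, htcard]

open Classical in
/-- choice of a witnessing family for a member of `IntPow` -/
noncomputable def Tsel (k r : ℕ) (𝒰 : Set (Set Z)) (S : Set (Fin k → Z)) : Set (Set Z) :=
  if h : S ∈ IntPow k r 𝒰 then h.choose else ∅

lemma Tsel_spec {k r : ℕ} {𝒰 : Set (Set Z)} {S : Set (Fin k → Z)}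
    (h : S ∈ IntPow k r 𝒰) :
    Tsel k r 𝒰 S ⊆ 𝒰 ∧ (Tsel k r 𝒰 S).Finite ∧ r + 1 ≤ (Tsel k r 𝒰 S).ncard ∧
      S = powk k (⋂₀ Tsel k r 𝒰 S) := by
  rw [Tsel, dif_pos h]
  obtain ⟨h1, h2, h3, h4, h5⟩ := h.choose_spec
  exact ⟨h1, h2, h3, h5⟩

/-- Key lemma: if all finite powers of `Z` are Hurewicz then `Z` satisfies
`S_fin(Ω, Ω^gp)`. -/
lemma powersHur_to_Sfin (Z : Type u) [TopologicalSpace Z]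
    (h : ∀ k : ℕ, 1 ≤ k → HurewiczProp (Fin k → Z)) :
    Sfin (OmegaCovers Z) (groupables (OmegaCovers Z)) := by
  classical
  intro 𝒰 h𝒰
  have happ : ∀ k : ℕ, ∃ 𝒜 : ℕ → Set (Set (Fin (k + 1) → Z)),
      (∀ n, 𝒜 n ⊆ IntPow (k + 1) n (𝒰 n) ∧ (𝒜 n).Finite) ∧
      ∀ p : Fin (k + 1) → Z, ∃ m, ∀ n ≥ m, p ∈ ⋃₀ 𝒜 n := by
    intro k
    exact h (k + 1) (by omega) (fun n => IntPow (k + 1) n (𝒰 n))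
      (fun n => IntPow_mem_OX (by omega) (h𝒰 n))
  choose 𝒜 h𝒜 hcap using happ
  set ℱ₀ : ℕ → Set (Set Z) := fun n =>
    ⋃ k ∈ Finset.range (n + 1), ⋃ S ∈ 𝒜 k n, Tsel (k + 1) n (𝒰 n) S with hℱ₀def
  have hℱ₀ : ∀ n, ℱ₀ n ⊆ 𝒰 n ∧ (ℱ₀ n).Finite := by
    intro n
    constructor
    · intro U hU
      simp only [hℱ₀def, mem_iUnion] at hU
      obtain ⟨k, -, S, hS, hU⟩ := hU
      exact (Tsel_spec ((h𝒜 k n).1 hS)).1 hU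
    · apply Set.Finite.biUnion (Finset.range (n + 1)).finite_toSet
      intro k _
      apply Set.Finite.biUnion ((h𝒜 k n).2)
      intro S hS
      exact (Tsel_spec ((h𝒜 k n).1 hS)).2.1
  have hP : ∀ F : Set Z, F.Finite → F.Nonempty →
      ∃ N, ∀ n ≥ N, n + 1 ≤ {U ∈ ℱ₀ n | F ⊆ U}.ncard := by
    intro F hF hFne
    obtain ⟨k, p, hrange⟩ := exists_enum hF hFne
    obtain ⟨N₀, hN₀⟩ := hcap k p
    refine ⟨max N₀ k, fun n hn => ?_⟩
    obtain ⟨S, hS, hpS⟩ := hN₀ n (le_trans (le_max_left _ _) hn)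
    have hSmem := (h𝒜 k n).1 hS
    obtain ⟨hTsub, hTfin, hTcard, hTS⟩ := Tsel_spec hSmem
    have hFsub : ∀ U ∈ Tsel (k + 1) n (𝒰 n) S, F ⊆ U := by
      intro U hU
      rw [hTS] at hpS
      have := (mem_powk_range p).1 hpS
      rw [hrange] at this
      exact this.trans (sInter_subset_of_mem hU)
    have hsub2 : Tsel (k + 1) n (𝒰 n) S ⊆ {U ∈ ℱ₀ n | F ⊆ U} := by
      intro U hU
      refine ⟨?_, hFsub U hU⟩
      simp only [hℱ₀def, mem_iUnion]
      exact ⟨k, Finset.mem_range.2 (by omega), S, hS, hU⟩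
    calc n + 1 ≤ (Tsel (k + 1) n (𝒰 n) S).ncard := hTcard
      _ ≤ {U ∈ ℱ₀ n | F ⊆ U}.ncard :=
        Set.ncard_le_ncard hsub2 ((hℱ₀ n).2.subset (sep_subset _ _))
  -- greedy choice of columns
  set g : ℕ → ℕ × Set (Set Z) := fun t => Nat.rec (0, ℱ₀ 0)
    (fun _ pr => (max (pr.1 + 1) (pr.2.ncard + 1),
      pr.2 ∪ ℱ₀ (max (pr.1 + 1) (pr.2.ncard + 1)))) t with hg
  set e : ℕ → ℕ := fun t => (g t).1 with he
  set A : ℕ → Set (Set Z) := fun t => (g t).2 with hA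
  have hg_succ : ∀ t, e (t + 1) = max (e t + 1) ((A t).ncard + 1) ∧
      A (t + 1) = A t ∪ ℱ₀ (e (t + 1)) := by
    intro t
    constructor <;> rfl
  have hAfin : ∀ t, (A t).Finite := by
    intro t
    induction t with
    | zero => exact (hℱ₀ 0).2
    | succ t ih => rw [(hg_succ t).2]; exact ih.union (hℱ₀ _).2
  have he_lt : ∀ t, e t < e (t + 1) := by
    intro t
    rw [(hg_succ t).1]
    omega
  have he_mono : StrictMono e := strictMono_nat_of_lt_succ he_lt
  have he_card : ∀ t, (A t).ncard + 1 ≤ e (t + 1) := by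
    intro t
    rw [(hg_succ t).1]
    omega
  have hAsub : ∀ t, ℱ₀ (e t) ⊆ A t := by
    intro t
    cases t with
    | zero => exact subset_rfl
    | succ t => rw [(hg_succ t).2]; exact subset_union_right
  have hAstep : ∀ t, A t ⊆ A (t + 1) := by
    intro t
    rw [(hg_succ t).2]
    exact subset_union_left
  have hAmono : ∀ s t, s ≤ t → A s ⊆ A t := by
    intro s t hst
    induction hst with
    | refl => exact subset_rfl
    | step _ ih => exact ih.trans (hAstep _)
  -- the groups
  set 𝒢 : ℕ → Set (Set Z) := fun t => Nat.rec (ℱ₀ 0)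
    (fun t _ => ℱ₀ (e (t + 1)) \ A t) t with h𝒢
  have h𝒢0 : 𝒢 0 = ℱ₀ 0 := rfl
  have h𝒢succ : ∀ t, 𝒢 (t + 1) = ℱ₀ (e (t + 1)) \ A t := fun t => rfl
  have h𝒢sub : ∀ t, 𝒢 t ⊆ ℱ₀ (e t) := by
    intro t
    cases t with
    | zero => exact subset_rfl
    | succ t => rw [h𝒢succ]; exact diff_subset
  have h𝒢fin : ∀ t, (𝒢 t).Finite := fun t => (hℱ₀ (e t)).2.subset (h𝒢sub t)
  have h𝒢disj : ∀ s t, s < t → ∀ U, U ∈ 𝒢 s → U ∉ 𝒢 t := by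
    intro s t hst U hUs hUt
    obtain ⟨t', rfl⟩ : ∃ t', t = t' + 1 := ⟨t - 1, by omega⟩
    rw [h𝒢succ] at hUt
    apply hUt.2
    exact hAmono s t' (by omega) ((hAsub s) (h𝒢sub s hUs))
  have h𝒢good : ∀ t, ∀ U ∈ 𝒢 t, IsOpen U ∧ U.Nonempty ∧ U ≠ univ := by
    intro t U hU
    exact (h𝒰 (e t)).1.1 U ((hℱ₀ (e t)).1 (h𝒢sub t hU))
  have h𝒢cap : ∀ F : Set Z, F.Finite → F.Nonempty → ∃ m, ∀ t ≥ m, ∃ U ∈ 𝒢 t, F ⊆ U := by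
    intro F hF hFne
    obtain ⟨N, hN⟩ := hP F hF hFne
    refine ⟨N + 1, fun t ht => ?_⟩
    obtain ⟨t', rfl⟩ : ∃ t', t = t' + 1 := ⟨t - 1, by omega⟩
    have h1 : N ≤ t' + 1 := by omega
    have hle : N ≤ e (t' + 1) := le_trans h1 he_mono.le_apply
    have hcard := hN (e (t' + 1)) hle
    have hA' := he_card t'
    have hex : ({U ∈ ℱ₀ (e (t' + 1)) | F ⊆ U} \ A t').Nonempty := by
      by_contra hcon
      rw [not_nonempty_iff_eq_empty, diff_eq_empty] at hcon
      have := Set.ncard_le_ncard hcon (hAfin t')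
      omega
    obtain ⟨U, hU1, hU2⟩ := hex
    exact ⟨U, by rw [h𝒢succ]; exact ⟨hU1.1, hU2⟩, hU1.2⟩
  -- assemble the selection
  set ℱ : ℕ → Set (Set Z) := fun n => if h : ∃ t, e t = n then 𝒢 h.choose else ∅ with hℱ
  have hℱeq : ∀ t, ℱ (e t) = 𝒢 t := by
    intro t
    have h : ∃ t', e t' = e t := ⟨t, rfl⟩
    simp only [hℱ, dif_pos h]
    exact congrArg 𝒢 (he_mono.injective h.choose_spec)
  have hunion : ⋃ n, ℱ n = ⋃ t, 𝒢 t := by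
    apply subset_antisymm
    · intro U hU
      obtain ⟨n, hn⟩ := mem_iUnion.1 hU
      simp only [hℱ] at hn
      split at hn
      · next h => exact mem_iUnion.2 ⟨h.choose, hn⟩
      · exact absurd hn (notMem_empty U)
    · intro U hU
      obtain ⟨t, ht⟩ := mem_iUnion.1 hU
      exact mem_iUnion.2 ⟨e t, by rw [hℱeq t]; exact ht⟩
  refine ⟨ℱ, ?_, ?_⟩
  · intro n
    constructor
    · simp only [hℱ]
      split
      · next h =>
        have := h.choose_spec
        calc 𝒢 h.choose ⊆ ℱ₀ (e h.choose) := h𝒢sub _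
          _ ⊆ 𝒰 (e h.choose) := (hℱ₀ _).1
          _ = 𝒰 n := by rw [this]
      · exact empty_subset _
    · simp only [hℱ]
      split
      · exact h𝒢fin _
      · exact finite_empty
  · rw [hunion]
    exact groups_groupable 𝒢 h𝒢fin h𝒢disj h𝒢good h𝒢cap

/-- To prove the Hurewicz property it suffices to treat sequences of covers without finite
subcovers. -/
lemma hur_of_core {Z : Type u} [TopologicalSpace Z]
    (hcore : ∀ 𝒰 : ℕ → Set (Set Z), (∀ n, 𝒰 n ∈ OX Z) →
      (∀ n, ¬ ∃ 𝒢 ⊆ 𝒰 n, 𝒢.Finite ∧ ⋃₀ 𝒢 = univ) →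
      ∃ ℱ : ℕ → Set (Set Z), (∀ n, ℱ n ⊆ 𝒰 n ∧ (ℱ n).Finite) ∧
        ∀ x : Z, ∃ m, ∀ n ≥ m, x ∈ ⋃₀ ℱ n) :
    HurewiczProp Z := by
  classical
  intro 𝒰 h𝒰
  set p : ℕ → Prop := fun n => ¬ ∃ 𝒢 ⊆ 𝒰 n, 𝒢.Finite ∧ ⋃₀ 𝒢 = univ with hp
  haveI : DecidablePred p := Classical.decPred p
  set sc : ℕ → Set (Set Z) := fun n =>
    if h : ∃ 𝒢 ⊆ 𝒰 n, 𝒢.Finite ∧ ⋃₀ 𝒢 = univ then h.choose else ∅ with hsc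
  have hsc_spec : ∀ n, ¬ p n → sc n ⊆ 𝒰 n ∧ (sc n).Finite ∧ ⋃₀ sc n = univ := by
    intro n hn
    rw [hp, not_not] at hn
    simp only [hsc, dif_pos hn]
    obtain ⟨h1, h2, h3⟩ := hn.choose_spec
    exact ⟨h1, h2, h3⟩
  by_cases hB : (setOf p).Finite
  · obtain ⟨m, hm⟩ := hB.bddAbove
    refine ⟨fun n => if p n then ∅ else sc n, ?_, ?_⟩
    · intro n
      by_cases h : p n
      · simp only [if_pos h]
        exact ⟨empty_subset _, finite_empty⟩
      · simp only [if_neg h]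
        exact ⟨(hsc_spec n h).1, (hsc_spec n h).2.1⟩
    · intro x
      refine ⟨m + 1, fun n hn => ?_⟩
      have hnp : ¬ p n := by
        intro hcon
        have := hm hcon
        omega
      simp only [if_neg hnp]
      rw [(hsc_spec n hnp).2.2]
      exact mem_univ x
  · have hinf : (setOf p).Infinite := hB
    obtain ⟨ℱ', hℱ'sub, hcap⟩ := hcore (fun j => 𝒰 (Nat.nth p j))
      (fun j => h𝒰 _) (fun j => Nat.nth_mem_of_infinite hinf j)
    refine ⟨fun n => if p n then ℱ' (Nat.count p n) else sc n, ?_, ?_⟩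
    · intro n
      by_cases h : p n
      · simp only [if_pos h]
        constructor
        · have := (hℱ'sub (Nat.count p n)).1
          rwa [Nat.nth_count h] at this
        · exact (hℱ'sub (Nat.count p n)).2
      · simp only [if_neg h]
        exact ⟨(hsc_spec n h).1, (hsc_spec n h).2.1⟩
    · intro x
      obtain ⟨m', hm'⟩ := hcap x
      refine ⟨Nat.nth p m', fun n hn => ?_⟩
      by_cases h : p n
      · simp only [if_pos h]
        apply hm'
        by_contra hcon
        push_neg at hcon
        have h1 : Nat.nth p (Nat.count p n) = n := Nat.nth_count h
        have h2 : Nat.nth p (Nat.count p n) < Nat.nth p m' :=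
          (Nat.nth_lt_nth hinf).2 hcon
        omega
      · simp only [if_neg h]
        rw [(hsc_spec n h).2.2]
        exact mem_univ x

/-- countable ω-subcovers exist when all finite powers are Hurewicz -/
lemma countable_omega_subcover {Z : Type u} [TopologicalSpace Z]
    (h : ∀ k : ℕ, 1 ≤ k → HurewiczProp (Fin k → Z))
    {𝒰 : Set (Set Z)} (h𝒰 : 𝒰 ∈ OmegaCovers Z) :
    ∃ C ⊆ 𝒰, C.Countable ∧ C ∈ OmegaCovers Z := by
  classical
  -- for each k, the power cover
  have hpow : ∀ k : ℕ, {S | ∃ U ∈ 𝒰, S = powk (k + 1) U} ∈ OX (Fin (k + 1) → Z) := by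
    intro k
    constructor
    · rintro S ⟨U, hU, rfl⟩
      obtain ⟨h1, h2, h3⟩ := h𝒰.1.1 U hU
      exact ⟨powk_isOpen h1, powk_nonempty h2, powk_ne_univ (by omega) h3⟩
    · apply eq_univ_iff_forall.2
      intro q
      obtain ⟨U, hU, hsub⟩ := h𝒰.2 (range q) (finite_range q) (range_nonempty q)
      exact ⟨powk (k + 1) U, ⟨U, hU, rfl⟩, (mem_powk_range q).2 hsub⟩
  have happ : ∀ k : ℕ, ∃ 𝒮 : ℕ → Set (Set (Fin (k + 1) → Z)),
      (∀ n, 𝒮 n ⊆ {S | ∃ U ∈ 𝒰, S = powk (k + 1) U} ∧ (𝒮 n).Finite) ∧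
      ∀ q : Fin (k + 1) → Z, ∃ m, ∀ n ≥ m, q ∈ ⋃₀ 𝒮 n := by
    intro k
    exact h (k + 1) (by omega) _ (fun _ => hpow k)
  choose 𝒮 h𝒮 hScap using happ
  set pk : ∀ k : ℕ, Set (Fin (k + 1) → Z) → Set Z := fun k S =>
    if h : ∃ U ∈ 𝒰, S = powk (k + 1) U then h.choose else ∅ with hpk
  have hpk_spec : ∀ k S, S ∈ {S | ∃ U ∈ 𝒰, S = powk (k + 1) U} →
      pk k S ∈ 𝒰 ∧ S = powk (k + 1) (pk k S) := by
    intro k S hS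
    have h' : ∃ U ∈ 𝒰, S = powk (k + 1) U := hS
    simp only [hpk, dif_pos h']
    exact h'.choose_spec
  set C : Set (Set Z) := ⋃ k : ℕ, ⋃ n : ℕ, pk k '' 𝒮 k n with hC
  have hCsub : C ⊆ 𝒰 := by
    rintro U hU
    simp only [hC, mem_iUnion] at hU
    obtain ⟨k, n, S, hS, rfl⟩ := hU
    exact (hpk_spec k S ((h𝒮 k n).1 hS)).1
  have hCcap : ∀ F : Set Z, F.Finite → F.Nonempty → ∃ U ∈ C, F ⊆ U := by
    intro F hF hFne
    obtain ⟨k, q, hq⟩ := exists_enum hF hFne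
    obtain ⟨m, hm⟩ := hScap k q
    obtain ⟨S, hS, hqS⟩ := hm m le_rfl
    refine ⟨pk k S, ?_, ?_⟩
    · simp only [hC, mem_iUnion]
      exact ⟨k, m, S, hS, rfl⟩
    · have h2 := (hpk_spec k S ((h𝒮 k m).1 hS)).2
      rw [h2] at hqS
      rw [← hq]
      exact (mem_powk_range q).1 hqS
  refine ⟨C, hCsub, ?_, ⟨⟨fun U hU => h𝒰.1.1 U (hCsub hU), ?_⟩, fun F hF hFne => hCcap F hF hFne⟩⟩
  · apply Set.countable_iUnion
    intro k
    apply Set.countable_iUnion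
    intro n
    exact ((h𝒮 k n).2.image _).countable
  · apply eq_univ_iff_forall.2
    intro x
    obtain ⟨U, hU, hsub⟩ := hCcap {x} (finite_singleton x) ⟨x, rfl⟩
    exact ⟨U, hU, hsub rfl⟩

section PFinPart
variable {X : Type u} [TopologicalSpace X]

/-- the basic Vietoris open set `[U] = {K : K ⊆ U}` -/
def box (U : Set X) : Set (PFin X) := {K | K.1 ⊆ U}

lemma isOpen_box {U : Set X} (hU : IsOpen U) : IsOpen (box U) :=
  TopologicalSpace.GenerateOpen.basic _ ⟨U, hU, Or.inl rfl⟩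

/-- the singleton element of `PFin X` -/
def pfin (x : X) : PFin X := ⟨{x}, finite_singleton x, ⟨x, rfl⟩⟩

lemma pfin_mem_box {x : X} {U : Set X} : pfin x ∈ box U ↔ x ∈ U := by
  exact singleton_subset_iff

lemma box_injective : Function.Injective (box (X := X)) := by
  intro U V h
  ext x
  constructor
  · intro hx
    exact pfin_mem_box.1 (h ▸ pfin_mem_box.2 hx)
  · intro hx
    exact pfin_mem_box.1 (h.symm ▸ pfin_mem_box.2 hx)

lemma box_nonempty {U : Set X} (hU : U.Nonempty) : (box U).Nonempty := by
  obtain ⟨x, hx⟩ := hU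
  exact ⟨pfin x, pfin_mem_box.2 hx⟩

lemma box_ne_univ {U : Set X} (hU : U ≠ univ) : box U ≠ univ := by
  obtain ⟨z, hz⟩ := (Set.ne_univ_iff_exists_notMem U).1 hU
  intro hcon
  exact hz (pfin_mem_box.1 (hcon ▸ mem_univ (pfin z)))

/-- (2) implies (3) -/
lemma sfin_pfin_to_sfin
    (h2 : Sfin (OmegaCovers (PFin X)) (groupables (OmegaCovers (PFin X)))) :
    Sfin (OmegaCovers X) (groupables (OmegaCovers X)) := by
  classical
  intro 𝒰 h𝒰
  set 𝒰' : ℕ → Set (Set (PFin X)) := fun n => box '' 𝒰 n with h𝒰'def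
  have h𝒰' : ∀ n, 𝒰' n ∈ OmegaCovers (PFin X) := by
    intro n
    have hgood : ∀ T ∈ 𝒰' n, IsOpen T ∧ T.Nonempty ∧ T ≠ univ := by
      rintro T ⟨U, hU, rfl⟩
      obtain ⟨g1, g2, g3⟩ := (h𝒰 n).1.1 U hU
      exact ⟨isOpen_box g1, box_nonempty g2, box_ne_univ g3⟩
    have hω : ∀ 𝒮 : Set (PFin X), 𝒮.Finite → 𝒮.Nonempty → ∃ T ∈ 𝒰' n, 𝒮 ⊆ T := by
      intro 𝒮 h𝒮fin h𝒮ne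
      have hFfin : (⋃ K ∈ 𝒮, K.1).Finite := h𝒮fin.biUnion fun K _ => K.2.1
      have hFne : (⋃ K ∈ 𝒮, K.1).Nonempty := by
        obtain ⟨K, hK⟩ := h𝒮ne
        obtain ⟨x, hx⟩ := K.2.2
        exact ⟨x, mem_biUnion hK hx⟩
      obtain ⟨U, hU, hsub⟩ := (h𝒰 n).2 _ hFfin hFne
      refine ⟨box U, ⟨U, hU, rfl⟩, fun K hK => ?_⟩
      exact fun x hx => hsub (mem_biUnion hK hx)
    refine ⟨⟨hgood, ?_⟩, hω⟩
    apply eq_univ_iff_forall.2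
    intro K
    obtain ⟨T, hT, hsub⟩ := hω {K} (finite_singleton K) ⟨K, rfl⟩
    exact ⟨T, hT, hsub rfl⟩
  obtain ⟨𝒜, h𝒜, hgp⟩ := h2 𝒰' h𝒰'
  set ℱ : ℕ → Set (Set X) := fun n => {U ∈ 𝒰 n | box U ∈ 𝒜 n} with hℱdef
  have hℱfin : ∀ n, (ℱ n).Finite := by
    intro n
    apply (Set.Finite.preimage box_injective.injOn (h𝒜 n).2).subset
    intro U hU
    exact hU.2
  set C : Set (Set X) := ⋃ n, ℱ n with hCdef
  have himg : ⋃ n, 𝒜 n = box '' C := by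
    apply subset_antisymm
    · intro T hT
      obtain ⟨n, hn⟩ := mem_iUnion.1 hT
      obtain ⟨U, hU, rfl⟩ := (h𝒜 n).1 hn
      exact ⟨U, mem_iUnion.2 ⟨n, hU, hn⟩, rfl⟩
    · rintro T ⟨U, hU, rfl⟩
      obtain ⟨n, hn⟩ := mem_iUnion.1 hU
      exact mem_iUnion.2 ⟨n, hn.2⟩
  obtain ⟨hΩ', φ', hfib', hJ'⟩ := hgp
  rw [himg] at hΩ' hJ'
  have hCgood : ∀ U ∈ C, IsOpen U ∧ U.Nonempty ∧ U ≠ univ := by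
    intro U hU
    obtain ⟨n, hn⟩ := mem_iUnion.1 hU
    exact (h𝒰 n).1.1 U hn.1
  have hCω : ∀ F : Set X, F.Finite → F.Nonempty → ∀ D : Set (Set X), D = C ∨
      (∃ J : Set ℕ, D = {U ∈ C | φ' (box U) ∈ J} ∧ {T ∈ box '' C | φ' T ∈ J} ∈
        OmegaCovers (PFin X)) → ∃ U ∈ D, F ⊆ U := by
    intro F hF hFne D hD
    rcases hD with rfl | ⟨J, rfl, hJmem⟩
    · obtain ⟨T, hT, hsub⟩ := hΩ'.2 {⟨F, hF, hFne⟩} (finite_singleton _) ⟨_, rfl⟩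
      obtain ⟨U, hU, rfl⟩ := hT
      exact ⟨U, hU, hsub rfl⟩
    · obtain ⟨T, hT, hsub⟩ := hJmem.2 {⟨F, hF, hFne⟩} (finite_singleton _) ⟨_, rfl⟩
      obtain ⟨U, hU, rfl⟩ := hT.1
      exact ⟨U, ⟨hU, hT.2⟩, hsub rfl⟩
  have hCΩ : C ∈ OmegaCovers X := by
    refine ⟨⟨hCgood, ?_⟩, ?_⟩
    · apply eq_univ_iff_forall.2
      intro x
      obtain ⟨U, hU, hsub⟩ := hCω {x} (finite_singleton x) ⟨x, rfl⟩ C (Or.inl rfl)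
      exact ⟨U, hU, hsub rfl⟩
    · intro F hF hFne
      exact hCω F hF hFne C (Or.inl rfl)
  refine ⟨ℱ, fun n => ⟨fun U hU => hU.1, hℱfin n⟩, hCΩ, fun U => φ' (box U), ?_, ?_⟩
  · intro m
    apply (Set.Finite.preimage box_injective.injOn (hfib' m)).subset
    intro U hU
    refine ⟨?_, hU.2⟩
    rw [himg]
    exact ⟨U, hU.1, rfl⟩
  · intro J hJ
    have hJmem := hJ' J hJ
    have hgood' : ∀ U ∈ {U ∈ C | φ' (box U) ∈ J}, IsOpen U ∧ U.Nonempty ∧ U ≠ univ :=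
      fun U hU => hCgood U hU.1
    refine ⟨⟨hgood', ?_⟩, ?_⟩
    · apply eq_univ_iff_forall.2
      intro x
      obtain ⟨U, hU, hsub⟩ := hCω {x} (finite_singleton x) ⟨x, rfl⟩ _
        (Or.inr ⟨J, rfl, hJmem⟩)
      exact ⟨U, hU, hsub rfl⟩
    · intro F hF hFne
      exact hCω F hF hFne _ (Or.inr ⟨J, rfl, hJmem⟩)

end PFinPart

section Powers
variable {X : Type u} [TopologicalSpace X]

/-- parametrized surjections onto pieces of powers of `PFin X` -/
noncomputable def Phi (k M : ℕ) (p : Fin ((M + 1) * k) → X) : Fin k → PFin X :=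
  fun i => ⟨range (fun j : Fin (M + 1) => p (finProdFinEquiv (j, i))),
    finite_range _, range_nonempty _⟩

lemma Phi_continuous (k M : ℕ) : Continuous (Phi (X := X) k M) := by
  apply continuous_pi
  intro i
  rw [continuous_generateFrom_iff]
  rintro S ⟨U, hU, hS | hS⟩
  · have : (fun p => Phi (X := X) k M p i) ⁻¹' S =
        ⋂ j : Fin (M + 1), (fun p : Fin ((M + 1) * k) → X => p (finProdFinEquiv (j, i))) ⁻¹' U := by
      subst hS
      ext p
      simp only [mem_preimage, mem_iInter, Phi]
      constructor
      · intro h j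
        exact h ⟨j, rfl⟩
      · rintro h x ⟨j, rfl⟩
        exact h j
    rw [this]
    exact isOpen_iInter_of_finite fun j => (continuous_apply (A := fun _ => X) _).isOpen_preimage U hU
  · have : (fun p => Phi (X := X) k M p i) ⁻¹' S =
        ⋃ j : Fin (M + 1), (fun p : Fin ((M + 1) * k) → X => p (finProdFinEquiv (j, i))) ⁻¹' U := by
      subst hS
      ext p
      simp only [mem_preimage, mem_iUnion, Phi]
      constructor
      · rintro ⟨x, ⟨j, rfl⟩, hxU⟩
        exact ⟨j, hxU⟩
      · rintro ⟨j, hj⟩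
        exact ⟨p (finProdFinEquiv (j, i)), ⟨j, rfl⟩, hj⟩
    rw [this]
    exact isOpen_iUnion fun j => (continuous_apply (A := fun _ => X) _).isOpen_preimage U hU

lemma Phi_covers (k : ℕ) (z : Fin k → PFin X) : ∃ M, z ∈ range (Phi k M) := by
  classical
  have hl : ∀ i : Fin k, ∃ l : List X, l ≠ [] ∧ ∀ x, x ∈ l ↔ x ∈ (z i).1 := by
    intro i
    refine ⟨(z i).2.1.toFinset.toList, ?_, ?_⟩
    · intro hcon
      obtain ⟨x, hx⟩ := (z i).2.2
      have : x ∈ (z i).2.1.toFinset.toList := by simp [hx]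
      simp [hcon] at this
    · intro x; simp
  choose l hlne hlmem using hl
  set pg : Fin k → ℕ → X := fun i j =>
    if hj : j < (l i).length then (l i).get ⟨j, hj⟩ else (l i).head (hlne i) with hpg
  have hpg_mem : ∀ i j, pg i j ∈ l i := by
    intro i j
    rw [hpg]
    dsimp only
    split
    · exact List.get_mem _ _
    · exact List.head_mem (hlne i)
  have hpg_get : ∀ i (idx : Fin (l i).length), pg i idx.1 = (l i).get idx := by
    intro i idx
    rw [hpg]
    dsimp only
    rw [dif_pos idx.2]
  set M : ℕ := Finset.univ.sup (fun i => (l i).length) with hM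
  refine ⟨M, fun m => pg (finProdFinEquiv.symm m).2 (finProdFinEquiv.symm m).1.1, ?_⟩
  funext i
  apply Subtype.ext
  show range _ = (z i).1
  ext x
  constructor
  · rintro ⟨j, rfl⟩
    simp only [Equiv.symm_apply_apply]
    exact (hlmem i _).1 (hpg_mem i j.1)
  · intro hx
    obtain ⟨idx, hidx⟩ := List.mem_iff_get.1 ((hlmem i x).2 hx)
    have hlen : (l i).length ≤ M := by
      rw [hM]
      exact Finset.le_sup (f := fun i => (l i).length) (Finset.mem_univ i)
    refine ⟨⟨idx.1, by omega⟩, ?_⟩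
    simp only [Equiv.symm_apply_apply]
    rw [hpg_get i idx]
    exact hidx

end Powers

/-- all finite powers of `PFin X` are Hurewicz when all finite powers of `X` are -/
lemma powersPFinHur {X : Type u} [TopologicalSpace X] [T2Space X] [Infinite X]
    (h4 : ∀ n : ℕ, 1 ≤ n → HurewiczProp (Fin n → X)) (k : ℕ) (hk : 1 ≤ k) :
    Hur' (Fin k → PFin X) := by
  apply Hur'.sigma_union (fun M => Fin ((M + 1) * k) → X) (Phi k)
    (fun M => Phi_continuous k M)
  · intro M
    have hpos : 1 ≤ (M + 1) * k :=
      Nat.one_le_iff_ne_zero.2 (Nat.mul_ne_zero (Nat.succ_ne_zero M) (by omega))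
    haveI : Nonempty (Fin ((M + 1) * k)) := ⟨⟨0, hpos⟩⟩
    exact hurewicz_bridge (h4 _ hpos)
  · exact Phi_covers k

/-- (1) implies (4): if `PFin X` is Hurewicz then all finite powers of `X` are -/
lemma hurPFin_to_powers {X : Type u} [TopologicalSpace X]
    (h1 : HurewiczProp (PFin X)) (k : ℕ) (hk : 1 ≤ k) :
    HurewiczProp (Fin k → X) := by
  classical
  apply hur_of_core
  intro 𝒰 h𝒰 hnoB
  haveI : Nonempty (Fin k) := ⟨⟨0, hk⟩⟩
  set ℋ : ℕ → Set (Set (PFin X)) := fun n =>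
    {T | ∃ W : Set X, IsOpen W ∧ W.Nonempty ∧
      (∃ 𝒢 ⊆ 𝒰 n, 𝒢.Finite ∧ powk k W ⊆ ⋃₀ 𝒢) ∧ T = box W} with hℋdef
  have hcov : ∀ n, ∀ K : PFin X, ∃ T ∈ ℋ n, K ∈ T := by
    intro n K
    have hmem : ∀ p ∈ powk k K.1, ∃ U ∈ 𝒰 n, p ∈ U := by
      intro p _
      have : p ∈ ⋃₀ 𝒰 n := (h𝒰 n).2 ▸ mem_univ p
      exact this
    choose! Up hUp1 hUp2 using hmem
    have hO : powk k K.1 ⊆ ⋃₀ (Up '' powk k K.1) := by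
      intro p hp
      exact ⟨Up p, ⟨p, hp, rfl⟩, hUp2 p hp⟩
    have hOopen : IsOpen (⋃₀ (Up '' powk k K.1)) := by
      apply isOpen_sUnion
      rintro V ⟨p, hp, rfl⟩
      exact ((h𝒰 n).1 _ (hUp1 p hp)).1
    obtain ⟨W, hWopen, hWsub, hWpow⟩ := finite_tube K.2.1 hOopen hO
    refine ⟨box W, ⟨W, hWopen, K.2.2.mono hWsub, ⟨Up '' powk k K.1,
      fun V => ?_, (powk_finite K.2.1).image _, hWpow⟩, rfl⟩, hWsub⟩
    rintro ⟨p, hp, rfl⟩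
    exact hUp1 p hp
  have hℋOX : ∀ n, ℋ n ∈ OX (PFin X) := by
    intro n
    constructor
    · rintro T ⟨W, hWopen, hWne, ⟨𝒢, h𝒢sub, h𝒢fin, h𝒢pow⟩, rfl⟩
      refine ⟨isOpen_box hWopen, box_nonempty hWne, box_ne_univ ?_⟩
      intro hcon
      apply hnoB n
      refine ⟨𝒢, h𝒢sub, h𝒢fin, ?_⟩
      apply eq_univ_of_univ_subset
      intro p _
      apply h𝒢pow
      rw [hcon]
      exact fun i => mem_univ _
    · apply eq_univ_iff_forall.2
      intro K
      obtain ⟨T, hT, hKT⟩ := hcov n K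
      exact ⟨T, hT, hKT⟩
  obtain ⟨𝒜, h𝒜, hcap⟩ := h1 ℋ hℋOX
  set gsel : ℕ → Set (PFin X) → Set (Set (Fin k → X)) := fun n T =>
    if h : T ∈ ℋ n then h.choose_spec.2.2.1.choose else ∅ with hgseldef
  have hgsel : ∀ n T, T ∈ ℋ n → gsel n T ⊆ 𝒰 n ∧ (gsel n T).Finite ∧
      ∀ K ∈ T, ∀ q : Fin k → X, range q ⊆ K.1 → q ∈ ⋃₀ gsel n T := by
    intro n T hT
    simp only [hgseldef, dif_pos hT]
    obtain ⟨hsub, hfin, hpow⟩ := hT.choose_spec.2.2.1.choose_spec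
    refine ⟨hsub, hfin, ?_⟩
    intro K hK q hq
    apply hpow
    intro i
    have hKT := hT.choose_spec.2.2.2
    rw [hKT] at hK
    exact hK (hq ⟨i, rfl⟩)
  refine ⟨fun n => ⋃ T ∈ 𝒜 n, gsel n T, ?_, ?_⟩
  · intro n
    constructor
    · intro V hV
      simp only [mem_iUnion] at hV
      obtain ⟨T, hT, hV⟩ := hV
      exact (hgsel n T ((h𝒜 n).1 hT)).1 hV
    · exact (h𝒜 n).2.biUnion fun T hT => (hgsel n T ((h𝒜 n).1 hT)).2.1
  · intro q
    obtain ⟨m, hm⟩ := hcap ⟨range q, finite_range q, range_nonempty q⟩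
    refine ⟨m, fun n hn => ?_⟩
    obtain ⟨T, hT, hKT⟩ := hm n hn
    obtain ⟨U, hU, hqU⟩ := (hgsel n T ((h𝒜 n).1 hT)).2.2 _ hKT q subset_rfl
    exact ⟨U, mem_iUnion.2 ⟨T, mem_iUnion.2 ⟨hT, hU⟩⟩, hqU⟩

/-- (3) implies (4): `S_fin(Ω,Ω^gp)` implies all finite powers of `X` are Hurewicz -/
lemma sfin_to_powers {X : Type u} [TopologicalSpace X]
    (h3 : Sfin (OmegaCovers X) (groupables (OmegaCovers X))) (k : ℕ) (hk : 1 ≤ k) :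
    HurewiczProp (Fin k → X) := by
  classical
  apply hur_of_core
  intro 𝒰 h𝒰 hnoB
  haveI : Nonempty (Fin k) := ⟨⟨0, hk⟩⟩
  -- monotone refinements
  set 𝒱 : ℕ → Set (Set (Fin k → X)) := fun m =>
    {S | ∃ u : ℕ → Set (Fin k → X), (∀ i ≤ m, u i ∈ 𝒰 i) ∧
      S = ⋂ i ∈ Finset.Iic m, u i} with h𝒱def
  have h𝒱open : ∀ m, ∀ S ∈ 𝒱 m, IsOpen S := by
    rintro m S ⟨u, hu, rfl⟩
    exact isOpen_biInter_finset fun i hi => ((h𝒰 i).1 _ (hu i (Finset.mem_Iic.1 hi))).1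
  have h𝒱cov : ∀ m, ∀ p : Fin k → X, ∃ S ∈ 𝒱 m, p ∈ S := by
    intro m p
    have : ∀ i : ℕ, ∃ U ∈ 𝒰 i, p ∈ U := by
      intro i
      have : p ∈ ⋃₀ 𝒰 i := (h𝒰 i).2 ▸ mem_univ p
      exact this
    choose u hu1 hu2 using this
    refine ⟨⋂ i ∈ Finset.Iic m, u i, ⟨u, fun i _ => hu1 i, rfl⟩, ?_⟩
    exact mem_biInter fun i _ => hu2 i
  set vsel : ℕ → Set (Fin k → X) → ℕ → Set (Fin k → X) := fun m S =>
    if h : S ∈ 𝒱 m then h.choose else fun _ => ∅ with hvseldef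
  have hvsel : ∀ m S, S ∈ 𝒱 m → ∀ i ≤ m, vsel m S i ∈ 𝒰 i ∧ S ⊆ vsel m S i := by
    intro m S hS i hi
    simp only [hvseldef, dif_pos hS]
    obtain ⟨hu, hSeq⟩ := hS.choose_spec
    refine ⟨hu i hi, ?_⟩
    intro p hp
    rw [hSeq] at hp
    simp only [mem_iInter] at hp
    exact hp i (Finset.mem_Iic.2 hi)
  -- ω-covers of X
  set 𝒲 : ℕ → Set (Set X) := fun n =>
    {W | IsOpen W ∧ W.Nonempty ∧ ∃ 𝒢 ⊆ 𝒱 n, 𝒢.Finite ∧ powk k W ⊆ ⋃₀ 𝒢} with h𝒲def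
  have h𝒲ω : ∀ n, ∀ F : Set X, F.Finite → F.Nonempty → ∃ W ∈ 𝒲 n, F ⊆ W := by
    intro n F hF hFne
    have : ∀ p ∈ powk k F, ∃ S ∈ 𝒱 n, p ∈ S := fun p _ => h𝒱cov n p
    choose! Sp hSp1 hSp2 using this
    have hO : powk k F ⊆ ⋃₀ (Sp '' powk k F) := by
      intro p hp
      exact ⟨Sp p, ⟨p, hp, rfl⟩, hSp2 p hp⟩
    have hOopen : IsOpen (⋃₀ (Sp '' powk k F)) := by
      apply isOpen_sUnion
      rintro V ⟨p, hp, rfl⟩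
      exact h𝒱open n _ (hSp1 p hp)
    obtain ⟨W, hWopen, hWsub, hWpow⟩ := finite_tube hF hOopen hO
    refine ⟨W, ⟨hWopen, hFne.mono hWsub, ⟨Sp '' powk k F, ?_,
      (powk_finite hF).image _, hWpow⟩⟩, hWsub⟩
    rintro V ⟨p, hp, rfl⟩
    exact hSp1 p hp
  have h𝒲Ω : ∀ n, 𝒲 n ∈ OmegaCovers X := by
    intro n
    have hgood : ∀ W ∈ 𝒲 n, IsOpen W ∧ W.Nonempty ∧ W ≠ univ := by
      rintro W ⟨hWopen, hWne, 𝒢, h𝒢sub, h𝒢fin, h𝒢pow⟩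
      refine ⟨hWopen, hWne, ?_⟩
      intro hcon
      apply hnoB n
      refine ⟨(fun S => vsel n S n) '' 𝒢, ?_, h𝒢fin.image _, ?_⟩
      · rintro V ⟨S, hS, rfl⟩
        exact (hvsel n S (h𝒢sub hS) n le_rfl).1
      · apply eq_univ_of_univ_subset
        intro p _
        have hp : p ∈ powk k W := by
          rw [hcon]; exact fun i => mem_univ _
        obtain ⟨S, hS, hpS⟩ := h𝒢pow hp
        exact ⟨vsel n S n, ⟨S, hS, rfl⟩, (hvsel n S (h𝒢sub hS) n le_rfl).2 hpS⟩
    refine ⟨⟨hgood, ?_⟩, fun F hF hFne => h𝒲ω n F hF hFne⟩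
    apply eq_univ_iff_forall.2
    intro x
    obtain ⟨W, hW, hsub⟩ := h𝒲ω n {x} (finite_singleton x) ⟨x, rfl⟩
    exact ⟨W, hW, hsub rfl⟩
  obtain ⟨𝒜, h𝒜, hgp⟩ := h3 𝒲 h𝒲Ω
  obtain ⟨φ, hfib, hbad⟩ := groupable_capture hgp
  set C : Set (Set X) := ⋃ n, 𝒜 n with hCdef
  -- origin of a member
  set o : Set X → ℕ := fun U => if h : ∃ n, U ∈ 𝒜 n then Nat.find h else 0 with hodef
  have ho : ∀ U ∈ C, U ∈ 𝒜 (o U) := by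
    intro U hU
    obtain ⟨n, hn⟩ := mem_iUnion.1 hU
    have h : ∃ n, U ∈ 𝒜 n := ⟨n, hn⟩
    simp only [hodef, dif_pos h]
    exact Nat.find_spec h
  -- witnessing families
  set gw : Set X → Set (Set (Fin k → X)) := fun U =>
    if h : U ∈ 𝒲 (o U) then h.2.2.choose else ∅ with hgwdef
  have hgw : ∀ U ∈ C, gw U ⊆ 𝒱 (o U) ∧ (gw U).Finite ∧ powk k U ⊆ ⋃₀ gw U := by
    intro U hU
    have h : U ∈ 𝒲 (o U) := (h𝒜 (o U)).1 (ho U hU)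
    simp only [hgwdef, dif_pos h]
    exact h.2.2.choose_spec
  -- bounds on fibers of members with small origin
  have hbd : ∀ t : ℕ, ∃ b, ∀ U ∈ C, o U < t → φ U ≤ b := by
    intro t
    have hfin : {U ∈ C | o U < t}.Finite := by
      apply (Set.Finite.biUnion (Finset.range t).finite_toSet
        (fun j (_ : j ∈ (Finset.range t : Set ℕ)) => (h𝒜 j).2)).subset
      intro U hU
      simp only [mem_iUnion]
      exact ⟨o U, by simpa using hU.2, ho U hU.1⟩
    obtain ⟨b, hb⟩ := (hfin.image φ).bddAbove
    exact ⟨b, fun U hU hoU => hb ⟨U, ⟨hU, hoU⟩, rfl⟩⟩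
  choose bb hbb using hbd
  set r : ℕ → ℕ := fun t => Nat.rec (bb 0 + 1) (fun t' prev => max prev (bb (t' + 1)) + 1) t
    with hrdef
  have hr_succ : ∀ t, r (t + 1) = max (r t) (bb (t + 1)) + 1 := fun t => rfl
  have hr_mono : StrictMono r := by
    apply strictMono_nat_of_lt_succ
    intro t
    rw [hr_succ]
    omega
  have hr_gt : ∀ t, bb t < r t := by
    intro t
    cases t with
    | zero => simp [hrdef]
    | succ t => rw [hr_succ]; omega
  have hr_key : ∀ t, ∀ U ∈ C, φ U = r t → t ≤ o U := by
    intro t U hU hφ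
    by_contra hcon
    push_neg at hcon
    have := hbb t U hU hcon
    have := hr_gt t
    omega
  -- final selection
  set ℱ : ℕ → Set (Set (Fin k → X)) := fun t =>
    ⋃ U ∈ {U ∈ C | φ U = r t}, (fun S => vsel (o U) S t) '' gw U with hℱdef
  refine ⟨ℱ, ?_, ?_⟩
  · intro t
    constructor
    · intro V hV
      simp only [hℱdef, mem_iUnion] at hV
      obtain ⟨U, hU, S, hS, rfl⟩ := hV
      exact (hvsel (o U) S ((hgw U hU.1).1 hS) t (hr_key t U hU.1 hU.2)).1
    · apply Set.Finite.biUnion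
      · exact (hfib (r t)).subset fun U hU => hU
      · intro U hU
        exact ((hgw U hU.1).2.1).image _
  · intro q
    obtain ⟨Nb, hNb⟩ := (hbad (range q) (finite_range q) (range_nonempty q)).bddAbove
    refine ⟨Nb + 1, fun t ht => ?_⟩
    have hidx : ∃ U ∈ C, φ U = r t ∧ range q ⊆ U := by
      by_contra hcon
      have : r t ∈ {n : ℕ | ¬ ∃ U ∈ C, φ U = n ∧ range q ⊆ U} := hcon
      have := hNb this
      have hrt : t ≤ r t := hr_mono.le_apply
      omega
    obtain ⟨U, hU, hφU, hsub⟩ := hidx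
    have hq : q ∈ powk k U := (mem_powk_range q).2 hsub
    obtain ⟨S, hS, hqS⟩ := (hgw U hU).2.2 hq
    refine ⟨vsel (o U) S t, ?_, ?_⟩
    · simp only [hℱdef, mem_iUnion]
      exact ⟨U, ⟨hU, hφU⟩, S, hS, rfl⟩
    · exact (hvsel (o U) S ((hgw U hU).1 hS) t (hr_key t U hU hφU)).2 hqS

/-- (4) implies (5): if all finite powers are Hurewicz, One has no winning strategy in
`G_fin(Ω, Ω^gp)` -/
lemma powers_to_game {X : Type u} [TopologicalSpace X]
    (h4 : ∀ n : ℕ, 1 ≤ n → HurewiczProp (Fin n → X)) :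
    ¬ OneWinsGfin (OmegaCovers X) (groupables (OmegaCovers X)) := by
  classical
  rintro ⟨σ, hσ, hwin⟩
  -- countable ω-subcovers of every move of One
  have hsub : ∀ l : List (Set (Set X)), ∃ C ⊆ σ l, C.Countable ∧ C ∈ OmegaCovers X :=
    fun l => countable_omega_subcover h4 (hσ l)
  choose Csub hCsub hCc hCΩ using hsub
  -- legal positions
  set Legal : List (Set (Set X)) → Prop := fun l =>
    ∀ m (h : m < l.length), l[m] ⊆ Csub (l.take m) ∧ (l[m]'h).Finite with hLegaldef
  have hLegal_nil : Legal [] := by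
    intro m h
    simp at h
  have hLegal_take : ∀ l, Legal l → ∀ j, Legal (l.take j) := by
    intro l hl j m h
    have hlen' : (List.take j l).length = min j l.length := by simp
    have hm : m < l.length := by rw [hlen'] at h; omega
    have hmj : m < j := by rw [hlen'] at h; omega
    constructor
    · rw [List.getElem_take, List.take_take, min_eq_left hmj.le]
      exact (hl m hm).1
    · rw [List.getElem_take]
      exact (hl m hm).2
  have hLegal_append : ∀ l G, Legal l → G ⊆ Csub l → G.Finite → Legal (l ++ [G]) := by
    intro l G hl hG hGfin m h
    rw [List.length_append, List.length_singleton] at h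
    rcases Nat.lt_or_ge m l.length with hm | hm
    · rw [List.getElem_append_left hm, List.take_append_of_le_length hm.le]
      exact hl m hm
    · have hmeq : m = l.length := by omega
      subst hmeq
      rw [List.getElem_append_right (le_refl _)]
      simp only [Nat.sub_self]
      rw [List.take_left]
      exact ⟨by simpa using hG, by simpa using hGfin⟩
  -- countability of the set of legal positions
  have hTTn : ∀ n : ℕ, {l : List (Set (Set X)) | Legal l ∧ l.length = n}.Countable := by
    intro n
    induction n with
    | zero =>
      apply Set.Countable.mono _ (Set.countable_singleton ([] : List (Set (Set X))))
      rintro l ⟨-, hlen⟩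
      simp [List.length_eq_zero_iff.1 hlen]
    | succ n ih =>
      have hdecomp : {l : List (Set (Set X)) | Legal l ∧ l.length = n + 1} ⊆
          ⋃ l' ∈ {l : List (Set (Set X)) | Legal l ∧ l.length = n},
            (fun G => l' ++ [G]) '' {G | G.Finite ∧ G ⊆ Csub l'} := by
        rintro l ⟨hl, hlen⟩
        have hln : n < l.length := by omega
        have hdrop : l.drop n = [l[n]] := by
          have h1 : l.drop n = l[n] :: l.drop (n + 1) := List.drop_eq_getElem_cons hln
          rw [h1, List.drop_eq_nil_of_le (by omega)]
        have hdecomp' : l = l.take n ++ [l[n]] := by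
          conv_lhs => rw [← List.take_append_drop n l]
          rw [hdrop]
        have h2 := hl n hln
        refine mem_biUnion ⟨hLegal_take l hl n, by simp [hlen]⟩
          ⟨l[n], ⟨h2.2, h2.1⟩, hdecomp'.symm⟩
      apply Set.Countable.mono hdecomp
      apply Set.Countable.biUnion ih
      intro l' _
      exact (Set.countable_setOf_finite_subset (hCc l')).image _
  have hTTc : {l : List (Set (Set X)) | Legal l}.Countable := by
    have : {l : List (Set (Set X)) | Legal l} =
        ⋃ n, {l : List (Set (Set X)) | Legal l ∧ l.length = n} := by
      ext l
      simp only [mem_iUnion, mem_setOf_eq]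
      exact ⟨fun h => ⟨l.length, h, rfl⟩, fun ⟨n, h, _⟩ => h⟩
    rw [this]
    exact Set.countable_iUnion hTTn
  -- injection of (position, count) pairs into ℕ
  haveI : Countable {l : List (Set (Set X)) // Legal l} := hTTc.to_subtype
  obtain ⟨ι, hι⟩ : ∃ f : {l : List (Set (Set X)) // Legal l} × ℕ → ℕ,
      Function.Injective f := (countable_iff_exists_injective _).1 inferInstance
  -- decoding
  set pr : ℕ → List (Set (Set X)) × ℕ := fun m =>
    if h : ∃ x : {l : List (Set (Set X)) // Legal l} × ℕ, ι x = m
    then (h.choose.1.1, h.choose.2) else ([], 0) with hprdef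
  have hpr : ∀ (l : List (Set (Set X))) (hl : Legal l) (r : ℕ),
      pr (ι (⟨l, hl⟩, r)) = (l, r) := by
    intro l hl r
    have h : ∃ x : {l : List (Set (Set X)) // Legal l} × ℕ, ι x = ι (⟨l, hl⟩, r) :=
      ⟨(⟨l, hl⟩, r), rfl⟩
    simp only [hprdef, dif_pos h]
    have := hι h.choose_spec
    rw [this]
  have hLegal_nilpair : Legal ([] : List (Set (Set X))) := hLegal_nil
  -- the master covers and the Hurewicz selections, for each power
  have happ : ∀ k : ℕ, ∃ 𝒜 : ℕ → Set (Set (Fin (k + 1) → X)),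
      (∀ m, 𝒜 m ⊆ IntPow (k + 1) (pr m).2 (Csub (pr m).1) ∧ (𝒜 m).Finite) ∧
      ∀ p : Fin (k + 1) → X, ∃ N, ∀ m ≥ N, p ∈ ⋃₀ 𝒜 m := by
    intro k
    exact h4 (k + 1) (by omega) (fun m => IntPow (k + 1) (pr m).2 (Csub (pr m).1))
      (fun m => IntPow_mem_OX (by omega) (hCΩ (pr m).1))
  choose 𝒜 h𝒜 hcap using happ
  -- index of a position
  set ii : List (Set (Set X)) → ℕ → ℕ := fun l r =>
    if h : Legal l then ι (⟨l, h⟩, r) else 0 with hiidef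
  -- the finite families extracted at a position
  set H : ℕ → List (Set (Set X)) → ℕ → Set (Set X) := fun k l r =>
    ⋃ S ∈ 𝒜 k (ii l r), Tsel (k + 1) r (Csub l) S with hHdef
  have hH : ∀ k l r, Legal l → (H k l r ⊆ Csub l ∧ (H k l r).Finite) ∧
      ∀ S ∈ 𝒜 k (ii l r), Tsel (k + 1) r (Csub l) S ⊆ Csub l ∧
        r + 1 ≤ (Tsel (k + 1) r (Csub l) S).ncard ∧
        S = powk (k + 1) (⋂₀ Tsel (k + 1) r (Csub l) S) := by
    intro k l r hl
    have hii : pr (ii l r) = (l, r) := by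
      rw [hiidef]
      simp only [dif_pos hl]
      exact hpr l hl r
    have hS : ∀ S ∈ 𝒜 k (ii l r), S ∈ IntPow (k + 1) r (Csub l) := by
      intro S hSmem
      have := (h𝒜 k (ii l r)).1 hSmem
      rwa [hii] at this
    constructor
    · constructor
      · intro U hU
        simp only [hHdef, mem_iUnion] at hU
        obtain ⟨S, hSmem, hU⟩ := hU
        exact (Tsel_spec (hS S hSmem)).1 hU
      · apply Set.Finite.biUnion (h𝒜 k (ii l r)).2
        intro S hSmem
        exact (Tsel_spec (hS S hSmem)).2.1
    · intro S hSmem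
      obtain ⟨t1, t2, t3, t4⟩ := Tsel_spec (hS S hSmem)
      exact ⟨t1, t3, t4⟩
  -- accumulated members of a position
  set OldOf : List (Set (Set X)) → Set (Set X) := fun l => {U | ∃ G ∈ l, U ∈ G}
    with hOlddef
  -- Two's moves
  set Fstep : List (Set (Set X)) → Set (Set X) := fun l =>
    ⋃ k ∈ Finset.range (l.length + 1), H k l (OldOf l).ncard with hFstepdef
  -- the branch
  set hh : ℕ → List (Set (Set X)) := fun n =>
    Nat.rec [] (fun _ l => l ++ [Fstep l]) n with hhdef
  set F : ℕ → Set (Set X) := fun n => Fstep (hh n) with hFdef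
  have hh_succ : ∀ n, hh (n + 1) = hh n ++ [F n] := fun n => rfl
  have hh_len : ∀ n, (hh n).length = n := by
    intro n
    induction n with
    | zero => rfl
    | succ n ih => rw [hh_succ, List.length_append, ih]; rfl
  have hFstep_ok : ∀ l, Legal l → Fstep l ⊆ Csub l ∧ (Fstep l).Finite := by
    intro l hl
    constructor
    · intro U hU
      simp only [hFstepdef, mem_iUnion] at hU
      obtain ⟨k, -, hU⟩ := hU
      exact ((hH k l (OldOf l).ncard hl).1.1) hU
    · apply Set.Finite.biUnion (Finset.range (l.length + 1)).finite_toSet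
      intro k _
      exact ((hH k l (OldOf l).ncard hl).1.2)
  have hh_legal : ∀ n, Legal (hh n) := by
    intro n
    induction n with
    | zero => exact hLegal_nil
    | succ n ih =>
      rw [hh_succ]
      exact hLegal_append _ _ ih (hFstep_ok _ ih).1 (hFstep_ok _ ih).2
  have hF_sub : ∀ n, F n ⊆ Csub (hh n) := fun n => (hFstep_ok _ (hh_legal n)).1
  have hF_fin : ∀ n, (F n).Finite := fun n => (hFstep_ok _ (hh_legal n)).2
  have hh_ofFn : ∀ n, hh n = List.ofFn (fun i : Fin n => F i) := by
    intro n
    induction n with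
    | zero => rfl
    | succ n ih =>
      rw [hh_succ, ih, List.ofFn_succ', List.concat_eq_append]
      rfl
  have hOld_rep : ∀ n, ∀ U : Set X, U ∈ OldOf (hh n) ↔ ∃ i < n, U ∈ F i := by
    intro n U
    rw [hOlddef]
    simp only [mem_setOf_eq]
    constructor
    · rintro ⟨G, hG, hU⟩
      rw [hh_ofFn n, List.mem_ofFn] at hG
      obtain ⟨i, rfl⟩ := hG
      exact ⟨i, i.2, hU⟩
    · rintro ⟨i, hi, hU⟩
      refine ⟨F i, ?_, hU⟩
      rw [hh_ofFn n, List.mem_ofFn]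
      exact ⟨⟨i, hi⟩, rfl⟩
  have hOld_fin : ∀ n, (OldOf (hh n)).Finite := by
    intro n
    apply (Set.Finite.biUnion (Finset.range n).finite_toSet
      (fun i (_ : i ∈ (Finset.range n : Set ℕ)) => hF_fin i)).subset
    intro U hU
    obtain ⟨i, hi, hU⟩ := (hOld_rep n U).1 hU
    simp only [mem_iUnion]
    exact ⟨i, by simpa using hi, hU⟩
  -- the play is legal for σ
  have hplay : ∀ n, (F n).Finite ∧ F n ⊆ σ (List.ofFn fun i : Fin n => F i) := by
    intro n
    refine ⟨hF_fin n, ?_⟩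
    rw [← hh_ofFn n]
    exact (hF_sub n).trans (hCsub (hh n))
  have hnotgp := hwin F hplay
  apply hnotgp
  -- the groups
  set 𝒢 : ℕ → Set (Set X) := fun n => F n \ OldOf (hh n) with h𝒢def
  have hunion : ⋃ n, F n = ⋃ n, 𝒢 n := by
    apply subset_antisymm
    · intro U hU
      obtain ⟨n, hn⟩ := mem_iUnion.1 hU
      have hex : ∃ n, U ∈ F n := ⟨n, hn⟩
      refine mem_iUnion.2 ⟨Nat.find hex, Nat.find_spec hex, ?_⟩
      intro hcon
      obtain ⟨i, hi, hUi⟩ := (hOld_rep _ U).1 hcon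
      exact Nat.find_min hex hi hUi
    · intro U hU
      obtain ⟨n, hn⟩ := mem_iUnion.1 hU
      exact mem_iUnion.2 ⟨n, hn.1⟩
  rw [hunion]
  apply groups_groupable
  · intro t
    exact (hF_fin t).subset diff_subset
  · intro s t hst U hUs hUt
    apply hUt.2
    exact (hOld_rep t U).2 ⟨s, hst, hUs.1⟩
  · intro t U hU
    have := (hCΩ (hh t)).1.1 U (hF_sub t hU.1)
    exact this
  · -- eventual capture with fresh witnesses
    intro G hGfin hGne
    obtain ⟨k, p, hrange⟩ := exists_enum hGfin hGne
    obtain ⟨N, hN⟩ := hcap k p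
    set idx : ℕ → ℕ := fun n => ii (hh n) (OldOf (hh n)).ncard with hidxdef
    have hidx_inj : Function.Injective idx := by
      intro a b hab
      simp only [hidxdef, hiidef, dif_pos (hh_legal a), dif_pos (hh_legal b)] at hab
      have := hι hab
      have hlist : hh a = hh b := congrArg (fun x => x.1.1) this
      have := congrArg List.length hlist
      rwa [hh_len, hh_len] at this
    have hbadfin : {n : ℕ | idx n < N}.Finite := by
      have : {n : ℕ | idx n < N} = idx ⁻¹' (Iio N) := rfl
      rw [this]
      exact (finite_Iio N).preimage hidx_inj.injOn
    obtain ⟨b, hb⟩ := hbadfin.bddAbove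
    refine ⟨max (b + 1) k, fun n hn => ?_⟩
    have hnk : k ≤ n := le_trans (le_max_right _ _) hn
    have hidxN : N ≤ idx n := by
      by_contra hcon
      push_neg at hcon
      have := hb (show n ∈ {n | idx n < N} from hcon)
      have hnb : b + 1 ≤ n := le_trans (le_max_left _ _) hn
      omega
    obtain ⟨S, hSmem, hpS⟩ := hN (idx n) hidxN
    have hHspec := (hH k (hh n) (OldOf (hh n)).ncard (hh_legal n)).2 S hSmem
    obtain ⟨hTsub, hTcard, hTS⟩ := hHspec
    set T := Tsel (k + 1) (OldOf (hh n)).ncard (Csub (hh n)) S with hTdef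
    have hGsubT : ∀ U ∈ T, G ⊆ U := by
      intro U hU
      rw [hTS] at hpS
      have := (mem_powk_range p).1 hpS
      rw [hrange] at this
      exact this.trans (sInter_subset_of_mem hU)
    have hTinF : T ⊆ F n := by
      intro U hU
      simp only [hFdef, hFstepdef, mem_iUnion]
      refine ⟨k, Finset.mem_range.2 (by rw [hh_len n]; omega), ?_⟩
      simp only [hHdef, mem_iUnion]
      exact ⟨S, hSmem, hU⟩
    have hfresh : (T \ OldOf (hh n)).Nonempty := by
      by_contra hcon
      rw [not_nonempty_iff_eq_empty, diff_eq_empty] at hcon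
      have hfinT : T.Finite := (hOld_fin n).subset hcon
      have := Set.ncard_le_ncard hcon (hOld_fin n)
      omega
    obtain ⟨U, hUT, hUold⟩ := hfresh
    exact ⟨U, ⟨hTinF hUT, hUold⟩, hGsubT U hUT⟩

/-- (5) implies (3) -/
lemma game_to_sfin {X : Type u} [TopologicalSpace X]
    (h5 : ¬ OneWinsGfin (OmegaCovers X) (groupables (OmegaCovers X))) :
    Sfin (OmegaCovers X) (groupables (OmegaCovers X)) := by
  by_contra hcon
  apply h5
  rw [Sfin] at hcon
  push_neg at hcon
  obtain ⟨𝒰, h𝒰, hfail⟩ := hcon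
  refine ⟨fun l => 𝒰 l.length, fun l => h𝒰 _, ?_⟩
  intro F hF
  apply hfail F
  intro n
  obtain ⟨hfin, hsub⟩ := hF n
  constructor
  · simpa using hsub
  · exact hfin
end S10
theorem statement10 {X : Type u} [TopologicalSpace X] [T2Space X] [Infinite X] :
    List.TFAE
      [HurewiczProp (PFin X),
       Sfin (OmegaCovers (PFin X)) (groupables (OmegaCovers (PFin X))),
       Sfin (OmegaCovers X) (groupables (OmegaCovers X)),
       ∀ n : ℕ, 1 ≤ n → HurewiczProp (Fin n → X),
       ¬ OneWinsGfin (OmegaCovers X) (groupables (OmegaCovers X))] := by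
  tfae_have 1 → 4 := fun h1 n hn => S10.hurPFin_to_powers h1 n hn
  tfae_have 4 → 1 := fun h4 =>
    ((S10.powersPFinHur h4 1 le_rfl).image (fun v => v 0) (continuous_apply 0)
      (fun K => ⟨fun _ => K, rfl⟩)).toHurewicz
  tfae_have 4 → 2 := fun h4 =>
    S10.powersHur_to_Sfin (PFin X) (fun k hk => (S10.powersPFinHur h4 k hk).toHurewicz)
  tfae_have 2 → 3 := fun h2 => S10.sfin_pfin_to_sfin h2
  tfae_have 3 → 4 := fun h3 n hn => S10.sfin_to_powers h3 n hn
  tfae_have 4 → 5 := fun h4 => S10.powers_to_game h4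
  tfae_have 5 → 3 := fun h5 => S10.game_to_sfin h5
  tfae_finish
end
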